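/- arXiv:math/0603540 — 5 statements merged into one kernel-verified Lean document; each statement's English description precedes it below -/
import Mathlib

section
/- If a set of reals A is κ-Universally Baire (i.e., for every continuous f : κ^ω → ω^ω there is a dense set of p ∈ κ^{<ω} such that f⁻¹(A) is meager or comeager below p), then A is weakly κ-Universally Baire (i.e., for every continuous f : κ^ω → ω^ω there is a dense set of p ∈ κ^{<ω} such that either f⁻¹(A) ∩ σ^ω is meager below p in σ^ω for a club of σ ∈ [κ]^ω, or comeager below p in σ^ω for a club of σ ∈ [κ]^ω). -/
open Set

/-- The basic open set of sequences in `κ^ω` extending the finite sequence `p ∈ κ^{<ω}`. -/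
def Np {κ : Type*} (p : List κ) : Set (ℕ → κ) :=
  {x | ∀ i : Fin p.length, x i.1 = p.get i}

/-- `D ⊆ κ^{<ω}` is dense: every condition has an extension in `D`. -/
def DenseCond {κ : Type*} (D : Set (List κ)) : Prop :=
  ∀ p : List κ, ∃ q ∈ D, p <+: q

/-- The subspace `σ^ω ⊆ κ^ω` of sequences with all values in `σ`. -/
abbrev SeqIn {κ : Type*} (σ : Set κ) : Type _ := {x : ℕ → κ // ∀ n, x n ∈ σ}

/-- `B ∩ σ^ω` is meager below `p` in the space `σ^ω`. -/
def MeagerBelowIn {κ : Type*} [TopologicalSpace κ] (σ : Set κ) (B : Set (ℕ → κ))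
    (p : List κ) : Prop :=
  IsMeagre (Subtype.val ⁻¹' (B ∩ Np p) : Set (SeqIn σ))

/-- `B ∩ σ^ω` is comeager below `p` in the space `σ^ω`. -/
def ComeagerBelowIn {κ : Type*} [TopologicalSpace κ] (σ : Set κ) (B : Set (ℕ → κ))
    (p : List κ) : Prop :=
  IsMeagre (Subtype.val ⁻¹' (Np p \ B) : Set (SeqIn σ))

/-- `C` is a club in `[κ]^ω`: a collection of countable subsets of `κ` which is cofinal
under inclusion and closed under unions of increasing `ω`-chains. -/
def IsClubIn {κ : Type*} (C : Set (Set κ)) : Prop :=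
  (∀ σ ∈ C, σ.Countable) ∧
  (∀ a : Set κ, a.Countable → ∃ σ ∈ C, a ⊆ σ) ∧
  (∀ s : ℕ → Set κ, (∀ n, s n ∈ C) → Monotone s → (⋃ n, s n) ∈ C)

section Aux
variable {κ : Type*}

def res (x : ℕ → κ) (n : ℕ) : List κ := List.ofFn fun i : Fin n => x i

lemma mem_Np_res_iff {x y : ℕ → κ} {n : ℕ} :
    y ∈ Np (res x n) ↔ ∀ i < n, y i = x i := by
  constructor
  · intro h i hi
    have := h ⟨i, by simpa [res] using hi⟩
    simpa [res, List.get_ofFn] using this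
  · intro h i
    have hi : (i : ℕ) < n := by simpa [res] using i.2
    rw [List.get_eq_getElem]
    simpa [res, List.get_ofFn] using h i hi

lemma Np_anti {p q : List κ} (h : p <+: q) : Np q ⊆ Np p := by
  intro x hx i
  have h1 := hx ⟨i.1, lt_of_lt_of_le i.2 h.length_le⟩
  rw [h1]
  simp only [List.get_eq_getElem]
  exact (h.getElem i.2).symm

lemma Np_res_mono (x : ℕ → κ) {m n : ℕ} (h : m ≤ n) : Np (res x n) ⊆ Np (res x m) :=
  fun _ hy => mem_Np_res_iff.mpr fun i hi => mem_Np_res_iff.mp hy i (lt_of_lt_of_le hi h)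

lemma prefix_res_of_mem {x : ℕ → κ} {p : List κ} (hx : x ∈ Np p) {m : ℕ}
    (hm : p.length ≤ m) : p <+: res x m := by
  rw [List.prefix_iff_eq_take]
  apply List.ext_get
  · simp [res, hm]
  · intro i h1 h2
    have hi : i < p.length := h1
    simp only [List.get_eq_getElem, List.getElem_take, res, List.getElem_ofFn]
    exact (hx ⟨i, hi⟩).symm

lemma isOpen_Np [TopologicalSpace κ] [DiscreteTopology κ] (p : List κ) : IsOpen (Np p) := by
  have : Np p = ⋂ i : Fin p.length, (fun x : ℕ → κ => x i.1) ⁻¹' {p.get i} := by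
    ext x; simp [Np]
  rw [this]
  exact isOpen_iInter_of_finite fun i =>
    (continuous_apply i.1).isOpen_preimage _ (isOpen_discrete _)

lemma Np_nonempty [Nonempty κ] (p : List κ) : (Np p).Nonempty := by
  classical
  refine ⟨fun i => if h : i < p.length then p.get ⟨i, h⟩ else Classical.arbitrary κ,
    fun i => ?_⟩
  simp [i.2]

lemma exists_cyl [TopologicalSpace κ] [DiscreteTopology κ] {U : Set (ℕ → κ)} (hU : IsOpen U)
    {x : ℕ → κ} (hx : x ∈ U) : ∃ n, Np (res x n) ⊆ U := by
  obtain ⟨I, u, hu, hsub⟩ := isOpen_pi_iff.mp hU x hx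
  refine ⟨(I.sup id) + 1, fun y hy => hsub ?_⟩
  intro i hi
  have hi' : i ∈ I := hi
  have : y i = x i := mem_Np_res_iff.mp hy i
    (lt_of_le_of_lt (Finset.le_sup (f := id) hi') (Nat.lt_succ_self _))
  rw [this]; exact (hu i hi').2

lemma exists_ext_avoid [Nonempty κ] [TopologicalSpace κ] [DiscreteTopology κ]
    {F : Set (ℕ → κ)} (hFc : IsClosed F) (hFi : interior F = ∅) (s : List κ) :
    ∃ t : List κ, s <+: t ∧ Np t ∩ F = ∅ := by
  have hd : Dense Fᶜ := interior_eq_empty_iff_dense_compl.mp hFi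
  obtain ⟨x, hxU, hxF⟩ := hd.inter_open_nonempty (Np s) (isOpen_Np s) (Np_nonempty s)
  obtain ⟨n, hn⟩ := exists_cyl hFc.isOpen_compl hxF
  refine ⟨res x (max n s.length), prefix_res_of_mem hxU (le_max_right _ _), ?_⟩
  apply eq_empty_iff_forall_notMem.mpr
  rintro y ⟨hy1, hy2⟩
  exact hn (Np_res_mono x (le_max_left _ _) hy1) hy2

lemma countable_lists {τ : Set κ} (h : τ.Countable) :
    {l : List κ | ∀ a ∈ l, a ∈ τ}.Countable := by
  haveI := h.to_subtype
  apply Set.Countable.mono ?_ (Set.countable_range (fun l : List τ => l.map Subtype.val))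
  intro l hl
  refine ⟨l.pmap (fun a ha => (⟨a, ha⟩ : τ)) hl, ?_⟩
  simp [List.map_pmap]

lemma exists_stage {s : ℕ → Set κ} (hmono : Monotone s) :
    ∀ l : List κ, (∀ a ∈ l, a ∈ ⋃ n, s n) → ∃ m, ∀ a ∈ l, a ∈ s m := by
  intro l
  induction l with
  | nil => exact fun _ => ⟨0, by simp⟩
  | cons a l ih =>
    intro h
    obtain ⟨m, hm⟩ := ih fun b hb => h b (List.mem_cons_of_mem _ hb)
    obtain ⟨n, hn⟩ := mem_iUnion.mp (h a List.mem_cons_self)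
    refine ⟨max m n, fun b hb => ?_⟩
    rcases List.mem_cons.mp hb with rfl | hb
    · exact hmono (le_max_right m n) hn
    · exact hmono (le_max_left m n) (hm b hb)

end Aux

lemma club_meagre (κ : Type*) [Nonempty κ] [TopologicalSpace κ] [DiscreteTopology κ]
    {M : Set (ℕ → κ)} (hM : IsMeagre M) :
    ∃ C : Set (Set κ), IsClubIn C ∧
      ∀ σ ∈ C, IsMeagre (Subtype.val ⁻¹' M : Set (SeqIn σ)) := by
  classical
  obtain ⟨S, hSnwd, hScnt, hMsub⟩ := isMeagre_iff_countable_union_isNowhereDense.mp hM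
  obtain ⟨F, hFc, hFi, hMF⟩ : ∃ F : ℕ → Set (ℕ → κ),
      (∀ n, IsClosed (F n)) ∧ (∀ n, interior (F n) = ∅) ∧ M ⊆ ⋃ n, F n := by
    rcases S.eq_empty_or_nonempty with rfl | hS
    · exact ⟨fun _ => ∅, fun _ => isClosed_empty, fun _ => interior_empty,
        by simpa using hMsub⟩
    · obtain ⟨g, hg⟩ := hScnt.exists_eq_range hS
      refine ⟨fun n => closure (g n), fun _ => isClosed_closure, fun n => ?_, ?_⟩
      · have : IsNowhereDense (g n) := hSnwd _ (hg ▸ mem_range_self n)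
        simpa [IsNowhereDense, closure_closure] using this.closure
      · intro x hx
        obtain ⟨t, htS, hxt⟩ := hMsub hx
        rw [hg] at htS; obtain ⟨n, rfl⟩ := htS
        exact mem_iUnion.mpr ⟨n, subset_closure hxt⟩
  choose e he1 he2 using fun n => exists_ext_avoid (hFc n) (hFi n)
  set a₀ := Classical.arbitrary κ with ha₀def
  refine ⟨{σ | σ.Countable ∧ a₀ ∈ σ ∧
    ∀ n (s : List κ), (∀ a ∈ s, a ∈ σ) → ∀ a ∈ e n s, a ∈ σ},
    ⟨fun σ hσ => hσ.1, ?_, ?_⟩, ?_⟩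
  · -- cofinal
    intro a ha
    let step : Set κ → Set κ := fun τk =>
      τk ∪ ⋃ n, ⋃ s ∈ {l : List κ | ∀ b ∈ l, b ∈ τk}, {b | b ∈ e n s}
    let τ : ℕ → Set κ := fun k => step^[k] (insert a₀ a)
    have hτsucc : ∀ k, τ (k + 1) = step (τ k) := fun k =>
      Function.iterate_succ_apply' step k _
    have hτmono : Monotone τ := monotone_nat_of_le_succ fun k => by
      rw [hτsucc k]; exact subset_union_left
    have hτcnt : ∀ k, (τ k).Countable := by
      intro k; induction k with
      | zero => exact ha.insert _
      | succ k ih =>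
        rw [hτsucc k]
        refine ih.union (countable_iUnion fun n => Countable.biUnion
          (countable_lists ih) fun s _ => (e n s).finite_toSet.countable)
    refine ⟨⋃ k, τ k, ⟨countable_iUnion hτcnt, mem_iUnion.mpr ⟨0, mem_insert _ _⟩, ?_⟩,
      fun b hb => mem_iUnion.mpr ⟨0, mem_insert_iff.mpr (Or.inr hb)⟩⟩
    intro n s hs b hb
    obtain ⟨m, hm⟩ := exists_stage hτmono s hs
    refine mem_iUnion.mpr ⟨m + 1, ?_⟩
    rw [hτsucc m]
    exact Or.inr (mem_iUnion.mpr ⟨n, mem_biUnion hm hb⟩)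
  · -- closed under chains
    intro s hs hmono
    refine ⟨countable_iUnion fun n => (hs n).1, mem_iUnion.mpr ⟨0, (hs 0).2.1⟩, ?_⟩
    intro n l hl b hb
    obtain ⟨m, hm⟩ := exists_stage hmono l hl
    exact mem_iUnion.mpr ⟨m, (hs m).2.2 n l hm b hb⟩
  · -- meagre in σ^ω
    rintro σ ⟨hσc, ha₀, hcl⟩
    rw [isMeagre_iff_countable_union_isNowhereDense]
    refine ⟨range (fun n => (Subtype.val ⁻¹' (F n) : Set (SeqIn σ))), ?_,
      countable_range _, ?_⟩
    · rintro t ⟨n, rfl⟩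
      have hclosed : IsClosed (Subtype.val ⁻¹' (F n) : Set (SeqIn σ)) :=
        (hFc n).preimage continuous_subtype_val
      rw [hclosed.isNowhereDense_iff, eq_empty_iff_forall_notMem]
      rintro x hx
      obtain ⟨U, hUopen, hUeq⟩ := isOpen_induced_iff.mp
        (isOpen_interior (s := (Subtype.val ⁻¹' (F n) : Set (SeqIn σ))))
      have hxU : x.val ∈ U := by rw [← hUeq] at hx; exact hx
      obtain ⟨m, hm⟩ := exists_cyl hUopen hxU
      have hsσ : ∀ a ∈ res x.val m, a ∈ σ := by
        intro a haa
        obtain ⟨i, rfl⟩ := List.mem_ofFn.mp haa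
        exact x.2 i
      have htσ : ∀ a ∈ e n (res x.val m), a ∈ σ := hcl n _ hsσ
      set t := e n (res x.val m) with htdef
      set y : ℕ → κ := fun i => if h : i < t.length then t.get ⟨i, h⟩ else a₀ with hydef
      have hyσ : ∀ i, y i ∈ σ := by
        intro i
        by_cases h : i < t.length
        · simpa [hydef, h] using htσ _ (List.get_mem t ⟨i, h⟩)
        · simpa [hydef, h] using ha₀
      have hyt : y ∈ Np t := fun i => by simp [hydef, i.2]
      have hys : y ∈ Np (res x.val m) := Np_anti (he1 n (res x.val m)) hyt
      have hmem : (⟨y, hyσ⟩ : SeqIn σ) ∈ interior (Subtype.val ⁻¹' (F n)) := by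
        rw [← hUeq]; exact hm hys
      have hyF : y ∈ F n := Set.mem_preimage.mp (interior_subset hmem)
      have : y ∈ Np t ∩ F n := ⟨hyt, hyF⟩
      rw [he2 n (res x.val m)] at this
      exact this
    · intro x hx
      obtain ⟨n, hn⟩ := mem_iUnion.mp (hMF hx)
      exact ⟨_, ⟨n, rfl⟩, hn⟩


/-- If `A` is `κ`-Universally Baire (for every continuous `f : κ^ω → ω^ω` there is a dense
set of conditions below which `f ⁻¹' A` is meager or comeager), then `A` is weakly
`κ`-Universally Baire (for every continuous `f` there is a dense set of conditions `p` such
that `f ⁻¹' A ∩ σ^ω` is meager below `p` in `σ^ω` for a club of countable `σ`, or comeager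
below `p` in `σ^ω` for a club of countable `σ`). -/
theorem fullUB_implies_weakUB (κ : Type*) [Infinite κ] [TopologicalSpace κ]
    [DiscreteTopology κ] (A : Set (ℕ → ℕ))
    (hUB : ∀ f : (ℕ → κ) → (ℕ → ℕ), Continuous f →
      DenseCond {p : List κ | IsMeagre (f ⁻¹' A ∩ Np p) ∨ IsMeagre (Np p \ f ⁻¹' A)}) :
    ∀ f : (ℕ → κ) → (ℕ → ℕ), Continuous f →
      DenseCond {p : List κ |
        (∃ C : Set (Set κ), IsClubIn C ∧ ∀ σ ∈ C, MeagerBelowIn σ (f ⁻¹' A) p) ∨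
        (∃ C : Set (Set κ), IsClubIn C ∧ ∀ σ ∈ C, ComeagerBelowIn σ (f ⁻¹' A) p)} := by
  intro f hf p
  obtain ⟨q, hq, hpq⟩ := hUB f hf p
  refine ⟨q, ?_, hpq⟩
  rcases hq with h | h
  · obtain ⟨C, hC, hCm⟩ := club_meagre κ h
    exact Or.inl ⟨C, hC, fun σ hσ => hCm σ hσ⟩
  · obtain ⟨C, hC, hCm⟩ := club_meagre κ h
    exact Or.inr ⟨C, hC, fun σ hσ => hCm σ hσ⟩
end

section
/- Let κ be an infinite cardinal, σ ⊆ κ countable, and suppose B ⊆ κ^ω is comeager below p ∈ σ^{<ω} in κ^ω, witnessed by a sequence of dense open sets each determined by a dense set of conditions in σ^{<ω}. Then B ∩ σ^ω is comeager below p in the space σ^ω. -/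
open Set

/-- The initial segment `x↾k` of `x ∈ κ^ω`. -/
def seg {κ : Type*} (x : ℕ → κ) (n : ℕ) : List κ :=
  List.ofFn fun i : Fin n => x i.1

lemma isOpen_seg_mem {κ : Type*} [TopologicalSpace κ] [DiscreteTopology κ]
    (E : Set (List κ)) : IsOpen {x : ℕ → κ | ∃ k, seg x k ∈ E} := by
  have : {x : ℕ → κ | ∃ k, seg x k ∈ E} = ⋃ k,
      (fun (x : ℕ → κ) (i : Fin k) => x i.1) ⁻¹' {v | List.ofFn v ∈ E} := by
    ext x; simp [seg]
  rw [this]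
  refine isOpen_iUnion fun k => ?_
  exact (isOpen_discrete _).preimage (continuous_pi fun i => continuous_apply _)

/-- Let `σ ⊆ κ` be countable and `p ∈ σ^{<ω}`.  Suppose `B ⊆ κ^ω` is comeager below `p`,
witnessed by a sequence of dense open sets, the `n`-th determined by a dense set `D n` of
conditions which is moreover dense in `σ^{<ω}` (every condition in `σ^{<ω}` extends to a
condition in `D n ∩ σ^{<ω}`): every `x ∈ N_p` meeting each `D n` lies in `B`.
Then `B ∩ σ^ω` is comeager below `p` in the space `σ^ω`. -/
theorem comeager_relativizes (κ : Type*) [Infinite κ] [TopologicalSpace κ]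
    [DiscreteTopology κ] (σ : Set κ) (hσ : σ.Countable) (B : Set (ℕ → κ))
    (p : List κ) (hp : ∀ a ∈ p, a ∈ σ) (D : ℕ → Set (List κ))
    (hdense : ∀ n, ∀ q : List κ, (∀ a ∈ q, a ∈ σ) →
      ∃ r ∈ D n, q <+: r ∧ ∀ a ∈ r, a ∈ σ)
    (hwit : ∀ x ∈ Np p, (∀ n, ∃ k, seg x k ∈ D n) → x ∈ B) :
    ComeagerBelowIn σ B p := by
  -- the relativized dense open sets
  set U : ℕ → Set (SeqIn σ) := fun n =>
    Subtype.val ⁻¹' {x : ℕ → κ | ∃ k, seg x k ∈ D n} with hU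
  have hUo : ∀ n, IsOpen (U n) := fun n =>
    (isOpen_seg_mem (D n)).preimage continuous_subtype_val
  have hUd : ∀ n, Dense (U n) := by
    intro n
    rw [dense_iff_inter_open]
    rintro T hT ⟨y, hyT⟩
    rw [isOpen_induced_iff] at hT
    obtain ⟨T', hT'o, rfl⟩ := hT
    rw [isOpen_pi_iff] at hT'o
    obtain ⟨I, u, hu, hsub⟩ := hT'o y.1 hyT
    -- take m bounding I
    obtain ⟨m, hm⟩ : ∃ m, ∀ i ∈ I, i < m := ⟨I.sup id + 1,
      fun i hi => Nat.lt_succ_of_le (Finset.le_sup (f := id) hi)⟩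
    -- extend y↾m to a condition in D n with entries in σ
    have hqσ : ∀ a ∈ seg y.1 m, a ∈ σ := by
      intro a ha
      simp only [seg, List.mem_ofFn] at ha
      obtain ⟨i, rfl⟩ := ha
      exact y.2 _
    obtain ⟨r, hrD, ⟨t, hrt⟩, hrσ⟩ := hdense n (seg y.1 m) hqσ
    -- define the sequence z
    refine ⟨⟨fun i => if h : i < r.length then r.get ⟨i, h⟩ else y.1 i, ?_⟩, ?_, ?_⟩
    · intro i
      by_cases h : i < r.length
      · simp only [h, dif_pos]; exact hrσ _ (List.get_mem r ⟨i, h⟩)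
      · simp only [h, dif_neg]; exact y.2 i
    · refine hsub ?_
      intro i hi
      have him : i < m := hm i hi
      have hir : i < r.length := by
        have : m ≤ r.length := by
          have := congrArg List.length hrt
          simp [seg] at this
          omega
        omega
      have hiq : i < (seg y.1 m).length := by simp [seg]; omega
      have hyr : r[i]'hir = y.1 i := by
        rw [← List.IsPrefix.getElem (⟨t, hrt⟩ : seg y.1 m <+: r) hiq]
        simp [seg]
      simp only [dif_pos hir, List.get_eq_getElem, hyr]
      exact (hu i hi).2
    · refine ⟨r.length, ?_⟩
      have : seg (fun i => if h : i < r.length then r.get ⟨i, h⟩ else y.1 i) r.length = r := by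
        apply List.ext_get
        · simp [seg]
        · intro i h1 h2
          simp only [seg, List.get_ofFn]
          simp [seg] at h1
          simp [h1]
      rw [this]; exact hrD
  -- each complement is meagre
  have hmeagre : IsMeagre (⋃ n, (U n)ᶜ) := by
    refine isMeagre_iUnion fun n => ?_
    rw [IsMeagre, compl_compl]
    exact residual_of_dense_open (hUo n) (hUd n)
  refine hmeagre.mono ?_
  rintro x ⟨hxNp, hxB⟩
  by_contra hx
  simp only [mem_iUnion, mem_compl_iff, not_exists, not_not] at hx
  exact hxB (hwit x.1 hxNp fun n => hx n)
end

section
/- Suppose κ is weakly compact and P is a κ-cc forcing notion. Then for every P-name ẋ for a real (element of ω^ω), there is a complete suborder A of P of size < κ such that ẋ is (equivalent to) an A-name; i.e., there is A ⊆ P with |A| < κ such that every maximal antichain of A is a maximal antichain of P, and ẋ is decided by conditions in A. -/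
open Set Cardinal

/-- `κ` is weakly compact: `κ` is uncountable and satisfies the partition property
`κ → (κ)²₂`; every 2-coloring of pairs from a well-ordered set of type `κ.ord` has a
homogeneous set of size `κ`. -/
def IsWeaklyCompact (κ : Cardinal.{u}) : Prop :=
  ℵ₀ < κ ∧ ∀ c : κ.ord.ToType → κ.ord.ToType → Bool,
    ∃ H : Set κ.ord.ToType, Cardinal.mk H = κ ∧
      ∀ a ∈ H, ∀ b ∈ H, ∀ a' ∈ H, ∀ b' ∈ H, a < b → a' < b' → c a b = c a' b'

/-- Two conditions of a poset are compatible. -/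
def Compat {P : Type*} [PartialOrder P] (p q : P) : Prop := ∃ r, r ≤ p ∧ r ≤ q

/-- An antichain in a forcing poset: a pairwise incompatible set of conditions. -/
def IsAntichainIn {P : Type*} [PartialOrder P] (A : Set P) : Prop :=
  ∀ p ∈ A, ∀ q ∈ A, p ≠ q → ¬ Compat p q

namespace WCproof

universe u

variable {κ : Cardinal.{u}}

local notation "ι" => Ordinal.ToType (Cardinal.ord κ)

noncomputable instance (o : Ordinal) : IsWellOrder o.ToType (· < ·) := isWellOrder_lt

/-- basic: the index type has cardinality κ -/
theorem mk_idx : #ι = κ := Cardinal.mk_ord_toType κ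

theorem mk_Iio_lt (i : ι) : #(Set.Iio i) < κ := Cardinal.mk_Iio_ord_toType i

theorem mk_Iic_lt (h0 : ℵ₀ < κ) (i : ι) : #(Set.Iic i) < κ := by
  have h1 : Set.Iic i = insert i (Set.Iio i) := (Set.Iio_insert).symm
  rw [h1]
  calc #(insert i (Set.Iio i) : Set ι) ≤ #(Set.Iio i) + 1 := Cardinal.mk_insert_le
    _ < κ := Cardinal.add_lt_of_lt h0.le (mk_Iio_lt i) (lt_trans one_lt_aleph0 h0)

theorem exists_gt (h0 : ℵ₀ < κ) (i : ι) : ∃ j : ι, i < j := by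
  by_contra h
  push_neg at h
  have : (Set.univ : Set ι) ⊆ Set.Iic i := fun j _ => h j
  have h2 : #ι ≤ #(Set.Iic i) := by
    calc #ι = #(Set.univ : Set ι) := (Cardinal.mk_univ).symm
      _ ≤ #(Set.Iic i) := Cardinal.mk_le_mk_of_subset this
  rw [mk_idx] at h2
  exact absurd (lt_of_le_of_lt h2 (mk_Iic_lt h0 i)) (lt_irrefl κ)

/-- an unbounded-ness predicate -/
def Ubd (S : Set ι) : Prop := ∀ a : ι, ∃ x ∈ S, a < x

theorem ubd_of_mk_eq (h0 : ℵ₀ < κ) {S : Set ι} (h : #S = κ) : Ubd S := by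
  intro a
  by_contra hc
  push_neg at hc
  have : S ⊆ Set.Iic a := fun x hx => hc x hx
  have h2 := lt_of_le_of_lt (Cardinal.mk_le_mk_of_subset this) (mk_Iic_lt h0 a)
  rw [h] at h2; exact absurd h2 (lt_irrefl κ)

theorem mk_le_of_ubd (hreg : κ.IsRegular) {S : Set ι} (h : Ubd S) : κ ≤ #S := by
  have h1 : Set.Unbounded (· < ·) S := by
    intro a
    obtain ⟨x, hx, hax⟩ := h a
    exact ⟨x, hx, not_lt.mpr hax.le⟩
  have h2 := Order.cof_le (s := S) (fun a => let ⟨x, hx, hax⟩ := h a; ⟨x, hx, hax.le⟩)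
  rwa [Ordinal.cof_toType, hreg.cof_ord] at h2

/-- small subsets are strictly bounded -/
theorem bdd_of_mk_lt (hreg : κ.IsRegular) {S : Set ι} (h : #S < κ) :
    ∃ b : ι, ∀ x ∈ S, x < b := by
  by_contra hc
  push_neg at hc
  have h2 := Order.cof_le (s := S) hc
  rw [Ordinal.cof_toType, hreg.cof_ord] at h2
  exact absurd (lt_of_le_of_lt h2 h) (lt_irrefl κ)

theorem bdd_range_of_small (hreg : κ.IsRegular) {β : Type u} (f : β → ι) (h : #β < κ) :
    ∃ b : ι, ∀ y, f y < b := by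
  obtain ⟨b, hb⟩ := bdd_of_mk_lt hreg (lt_of_le_of_lt Cardinal.mk_range_le h)
  exact ⟨b, fun y => hb _ (Set.mem_range_self y)⟩

/-- pigeonhole: a κ-sized set maps to a small type, some fiber is unbounded -/
theorem exists_ubd_fiber (h0 : ℵ₀ < κ) (hreg : κ.IsRegular) {β : Type u}
    (f : ι → β) (hβ : #β < κ) {S : Set ι} (hS : Ubd S) :
    ∃ b : β, Ubd {x | x ∈ S ∧ f x = b} := by
  by_contra hc
  push_neg at hc
  simp only [Ubd, not_forall, not_exists] at hc
  -- for each b, a bound g b such that members of the fiber are ≤ g b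
  choose g hg using hc
  obtain ⟨b₀, hb₀⟩ := bdd_range_of_small hreg g hβ
  obtain ⟨x, hxS, hx⟩ := hS b₀
  have h1 := hg (f x) x
  push_neg at h1
  have h2 : x ≤ g (f x) := h1 ⟨hxS, rfl⟩
  exact absurd (lt_of_lt_of_le hx (le_of_lt (lt_of_le_of_lt h2 (hb₀ (f x))))) (lt_irrefl b₀)

end WCproof

namespace WCproof

universe u
variable {κ : Cardinal.{u}}
local notation "ι" => Ordinal.ToType (Cardinal.ord κ)

section Lex

variable {σ : Type u} [LinearOrder σ] [WellFoundedLT σ]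

/-- strict lexicographic order on `σ → Bool` -/
def LexLT (f g : σ → Bool) : Prop :=
  ∃ ξ, (∀ η, η < ξ → f η = g η) ∧ f ξ = false ∧ g ξ = true

def LexLE (f g : σ → Bool) : Prop := f = g ∨ LexLT f g

theorem lex_total (f g : σ → Bool) : LexLE f g ∨ LexLT g f := by
  by_cases hfg : f = g
  · exact Or.inl (Or.inl hfg)
  · have hne : {ξ : σ | f ξ ≠ g ξ}.Nonempty := by
      by_contra hc
      rw [Set.not_nonempty_iff_eq_empty] at hc
      refine hfg (funext fun ξ => ?_)
      by_contra hne
      have h3 : ξ ∈ {ξ : σ | f ξ ≠ g ξ} := hne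
      rw [hc] at h3
      exact h3
    set ξ := (IsWellFounded.wf (α := σ) (r := (· < ·))).min _ hne with hξdef
    have hmem : f ξ ≠ g ξ := (IsWellFounded.wf).min_mem _ hne
    have hpre : ∀ η, η < ξ → f η = g η := by
      intro η hη
      by_contra hcon
      exact (IsWellFounded.wf).not_lt_min _ hcon hη
    rcases Bool.eq_false_or_eq_true (f ξ) with hf | hf
    · rcases Bool.eq_false_or_eq_true (g ξ) with hg | hg
      · exact absurd (hf.trans hg.symm) hmem
      · exact Or.inr ⟨ξ, fun η hη => (hpre η hη).symm, hg, hf⟩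
    · rcases Bool.eq_false_or_eq_true (g ξ) with hg | hg
      · exact Or.inl (Or.inr ⟨ξ, hpre, hf, hg⟩)
      · exact absurd (hf.trans hg.symm) hmem

theorem lexLT_position_unique {f g : σ → Bool} {ξ ξ' : σ}
    (h : (∀ η, η < ξ → f η = g η) ∧ f ξ = false ∧ g ξ = true)
    (h' : (∀ η, η < ξ' → f η = g η) ∧ f ξ' = false ∧ g ξ' = true) : ξ = ξ' := by
  rcases lt_trichotomy ξ ξ' with hlt | he | hgt
  · have := h'.1 ξ hlt
    rw [h.2.1, h.2.2] at this; exact absurd this (by simp)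
  · exact he
  · have := h.1 ξ' hgt
    rw [h'.2.1, h'.2.2] at this; exact absurd this (by simp)

theorem lexLT_not_le {f g : σ → Bool} (h : LexLT f g) : ¬ LexLE g f := by
  rintro (he | ⟨ξ', hpre', hg', hf'⟩)
  · obtain ⟨ξ, _, hf, hg⟩ := h
    rw [he] at hg; rw [hg] at hf; exact Bool.noConfusion (hf.symm.trans rfl)
  · obtain ⟨ξ, hpre, hf, hg⟩ := h
    rcases lt_trichotomy ξ ξ' with hlt | he | hgt
    · have := hpre' ξ hlt
      rw [hg, hf] at this; exact Bool.noConfusion this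
    · rw [he] at hg; rw [hg] at hg'; exact Bool.noConfusion hg'
    · have := hpre ξ' hgt
      rw [hg', hf'] at this; exact Bool.noConfusion this

theorem lexLT_neg {f g : σ → Bool} (h : LexLT f g) :
    LexLT (fun ξ => ! g ξ) (fun ξ => ! f ξ) := by
  obtain ⟨ξ, hpre, hf, hg⟩ := h
  refine ⟨ξ, fun η hη => ?_, ?_, ?_⟩
  · show Bool.not (g η) = Bool.not (f η)
    rw [hpre η hη]
  · show Bool.not (g ξ) = false
    rw [hg]; rfl
  · show Bool.not (f ξ) = true
    rw [hf]; rfl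

theorem lexLE_neg {f g : σ → Bool} (h : LexLE f g) :
    LexLE (fun ξ => ! g ξ) (fun ξ => ! f ξ) := by
  rcases h with he | hlt
  · exact Or.inl (by rw [he])
  · exact Or.inr (lexLT_neg hlt)

end Lex

/-- P1: weakly compact implies regular. -/
theorem regular_of_wc (hwc : IsWeaklyCompact κ) : κ.IsRegular := by
  obtain ⟨h0, hpart⟩ := hwc
  constructor
  · exact h0.le
  · by_contra hc
    push_neg at hc
    -- cof < κ; get an unbounded set S of size cof
    obtain ⟨S, hSub, hS⟩ := Order.exists_cof_eq ι
    rw [Ordinal.cof_toType] at hS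
    have hSlt : #S < κ := by rw [hS]; exact hc
    -- g : ι → S, least element of S that is ≥ α
    have hne : ∀ α : ι, {s : ι | s ∈ S ∧ α ≤ s}.Nonempty := by
      intro α
      obtain ⟨b, hbS, hb⟩ := hSub α
      exact ⟨b, hbS, hb⟩
    set g : ι → ι := fun α => (IsWellFounded.wf (α := ι) (r := (· < ·))).min _ (hne α) with hgdef
    have hgS : ∀ α, g α ∈ S ∧ α ≤ g α := fun α => (IsWellFounded.wf).min_mem _ (hne α)
    obtain ⟨H, hHmk, hhom⟩ := hpart (fun a b => decide (g a = g b))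
    -- two elements of H
    have hub := ubd_of_mk_eq h0 hHmk
    obtain ⟨i₀⟩ : Nonempty ι := by
      rw [← Cardinal.mk_ne_zero_iff, mk_idx]
      exact ne_of_gt (lt_trans Cardinal.aleph0_pos h0)
    obtain ⟨a₀, ha₀H, _⟩ := hub i₀
    obtain ⟨b₀, hb₀H, hab₀⟩ := hub a₀
    by_cases hv : g a₀ = g b₀
    · -- all pairs have equal g-value: H is bounded
      have hconst : ∀ a ∈ H, ∀ b ∈ H, a < b → g a = g b := by
        intro a ha b hb hab
        have := hhom a ha b hb a₀ ha₀H b₀ hb₀H hab hab₀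
        rw [decide_eq_decide] at this
        exact this.mpr hv
      have hbdd : ∀ a ∈ H, a ≤ g b₀ := by
        intro a ha
        rcases lt_trichotomy a b₀ with h1 | h1 | h1
        · calc a ≤ g a := (hgS a).2
            _ = g b₀ := hconst a ha b₀ hb₀H h1
        · rw [h1]; exact (hgS b₀).2
        · calc a ≤ g a := (hgS a).2
            _ = g b₀ := (hconst b₀ hb₀H a ha h1).symm
      have : H ⊆ Set.Iic (g b₀) := fun a ha => hbdd a ha
      have h2 := lt_of_le_of_lt (Cardinal.mk_le_mk_of_subset this) (mk_Iic_lt h0 (g b₀))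
      rw [hHmk] at h2; exact absurd h2 (lt_irrefl κ)
    · -- g is injective on H
      have hinj : ∀ a ∈ H, ∀ b ∈ H, a ≠ b → g a ≠ g b := by
        intro a ha b hb hab
        rcases Ne.lt_or_gt hab with h1 | h1
        · have := hhom a ha b hb a₀ ha₀H b₀ hb₀H h1 hab₀
          rw [decide_eq_decide] at this
          exact fun he => hv (this.mp he)
        · have := hhom b hb a ha a₀ ha₀H b₀ hb₀H h1 hab₀
          rw [decide_eq_decide] at this
          exact fun he => hv (this.mp he.symm)
      have hHle : #H ≤ #S := by
        apply Cardinal.mk_le_of_injective (f := fun a : H => (⟨g a.1, (hgS a.1).1⟩ : S))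
        intro a b hab
        simp only [Subtype.mk.injEq] at hab
        by_contra hne
        exact hinj a.1 a.2 b.1 b.2 (fun he => hne (Subtype.ext he)) hab
      rw [hHmk] at hHle
      exact absurd (lt_of_le_of_lt hHle hSlt) (lt_irrefl κ)

end WCproof

namespace WCproof

universe u
variable {κ : Cardinal.{u}}
local notation "ι" => Ordinal.ToType (Cardinal.ord κ)

theorem nonempty_idx (h0 : ℵ₀ < κ) : Nonempty ι := by
  rw [← Cardinal.mk_ne_zero_iff, mk_idx]
  exact ne_of_gt (lt_trans Cardinal.aleph0_pos h0)

theorem exists_pair (h0 : ℵ₀ < κ) {H : Set ι} (hub : Ubd H) :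
    ∃ a₀ ∈ H, ∃ b₀ ∈ H, a₀ < b₀ := by
  obtain ⟨i₀⟩ := nonempty_idx h0
  obtain ⟨a₀, ha₀, _⟩ := hub i₀
  obtain ⟨b₀, hb₀, hab⟩ := hub a₀
  exact ⟨a₀, ha₀, b₀, hb₀, hab⟩

section Sierp

variable {σ : Type u} [LinearOrder σ] [WellFoundedLT σ]

theorem sierpinski_core (h0 : ℵ₀ < κ) (hreg : κ.IsRegular)
    (hσ : #σ < κ) (hpre : ∀ ξ : σ, 2 ^ #(Set.Iio ξ) < κ)
    (t : ι → σ → Bool) (tinj : Function.Injective t) (H : Set ι) (hHmk : #H = κ)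
    (hmono : ∀ a ∈ H, ∀ b ∈ H, a < b → LexLE (t a) (t b)) : False := by
  letI : ∀ p, Decidable p := fun p => Classical.propDecidable p
  by_cases hσne : Nonempty σ
  case neg =>
    have : ∀ a b : ι, a = b := by
      intro a b
      apply tinj
      funext ξ
      exact absurd ⟨ξ⟩ hσne
    have h1 : #ι ≤ 1 := Cardinal.le_one_iff_subsingleton.mpr ⟨this⟩
    rw [mk_idx] at h1
    exact absurd (lt_of_le_of_lt h1 (lt_trans Cardinal.one_lt_aleph0 h0)) (lt_irrefl κ)
  case pos =>
  obtain ⟨ξdum⟩ := hσne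
  have hub := ubd_of_mk_eq h0 hHmk
  -- next element of H
  have hne : ∀ a : ι, {b : ι | b ∈ H ∧ a < b}.Nonempty := by
    intro a; obtain ⟨b, hb, hab⟩ := hub a; exact ⟨b, hb, hab⟩
  set NextH : ι → ι := fun a => (IsWellFounded.wf (α := ι) (r := (· < ·))).min _ (hne a)
    with hNdef
  have hNspec : ∀ a, NextH a ∈ H ∧ a < NextH a :=
    fun a => (IsWellFounded.wf).min_mem _ (hne a)
  have hNle : ∀ a, ∀ b ∈ H, a < b → NextH a ≤ b := by
    intro a b hb hab
    by_contra hcon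
    exact (IsWellFounded.wf).not_lt_min {b | b ∈ H ∧ a < b} (⟨hb, hab⟩ : b ∈ {b | b ∈ H ∧ a < b})
      (not_le.mp hcon)
  -- the difference position with the next element
  have hD : ∀ a, a ∈ H → ∃ ξ, (∀ η, η < ξ → t a η = t (NextH a) η) ∧
      t a ξ = false ∧ t (NextH a) ξ = true := by
    intro a ha
    have h1 := hmono a ha (NextH a) (hNspec a).1 (hNspec a).2
    rcases h1 with he | hlt
    · exact absurd (tinj he) (ne_of_lt (hNspec a).2)
    · exact hlt
  set D : ι → σ := fun a => if h : a ∈ H then (hD a h).choose else ξdum with hDdef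
  have hDspec : ∀ a, a ∈ H → (∀ η, η < D a → t a η = t (NextH a) η) ∧
      t a (D a) = false ∧ t (NextH a) (D a) = true := by
    intro a ha
    have : D a = (hD a ha).choose := by rw [hDdef]; simp [ha]
    rw [this]
    exact (hD a ha).choose_spec
  obtain ⟨ξ₀, hfib⟩ := exists_ubd_fiber h0 hreg D hσ hub
  -- prefix map
  set φ : ι → (Set.Iio ξ₀ → Bool) := fun a => fun η => t a η.1 with hφdef
  have hclaim : ∀ a, (a ∈ H ∧ D a = ξ₀) → ∀ b, (b ∈ H ∧ D b = ξ₀) → a < b → φ a ≠ φ b := by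
    rintro a ⟨haH, haD⟩ b ⟨hbH, hbD⟩ hab hphi
    have hpre_ab : ∀ η, η < ξ₀ → t a η = t b η := by
      intro η hη
      have := congrFun hphi ⟨η, hη⟩
      exact this
    have hsa := hDspec a haH
    have hsb := hDspec b hbH
    rw [haD] at hsa
    rw [hbD] at hsb
    have hNab := hNle a b hbH hab
    rcases eq_or_lt_of_le hNab with heq | hlt
    · rw [heq] at hsa
      rw [hsa.2.2] at hsb
      exact Bool.noConfusion hsb.2.1
    · have h2 := hmono (NextH a) (hNspec a).1 b hbH hlt
      rcases h2 with he | ⟨ζ, hpre2, hf2, ht2⟩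
      · rw [← he] at hsb
        rw [hsa.2.2] at hsb
        exact Bool.noConfusion hsb.2.1
      · rcases lt_trichotomy ζ ξ₀ with h3 | h3 | h3
        · have e1 : t (NextH a) ζ = t a ζ := (hsa.1 ζ h3).symm
          have e2 : t a ζ = t b ζ := hpre_ab ζ h3
          rw [e1, e2, ht2] at hf2
          exact Bool.noConfusion hf2
        · rw [h3] at hf2
          rw [hsa.2.2] at hf2
          exact Bool.noConfusion hf2
        · have e1 := hpre2 ξ₀ h3
          rw [hsa.2.2, hsb.2.1] at e1
          exact Bool.noConfusion e1
  -- the fiber injects into a small type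
  have hS'mk : κ ≤ #({x | x ∈ H ∧ D x = ξ₀}) := mk_le_of_ubd hreg hfib
  have hinj2 : Function.Injective
      (fun a : {x | x ∈ H ∧ D x = ξ₀} => ({η | φ a.1 η = true} : Set (Set.Iio ξ₀))) := by
    intro a b hab
    simp only at hab
    have hphieq : φ a.1 = φ b.1 := by
      funext η
      have h1 := Set.ext_iff.mp hab η
      simp only [Set.mem_setOf_eq] at h1
      rcases Bool.eq_false_or_eq_true (φ a.1 η) with h2 | h2 <;>
        rcases Bool.eq_false_or_eq_true (φ b.1 η) with h3 | h3 <;>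
        simp [h2, h3] at h1 ⊢
    by_contra hne2
    have hne3 : a.1 ≠ b.1 := fun he => hne2 (Subtype.ext he)
    rcases Ne.lt_or_gt hne3 with h1 | h1
    · exact hclaim a.1 a.2 b.1 b.2 h1 hphieq
    · exact hclaim b.1 b.2 a.1 a.2 h1 hphieq.symm
  have hle2 : #({x | x ∈ H ∧ D x = ξ₀}) ≤ #(Set (Set.Iio ξ₀)) :=
    Cardinal.mk_le_of_injective hinj2
  rw [Cardinal.mk_set] at hle2
  exact absurd (lt_of_le_of_lt (le_trans hS'mk hle2) (hpre ξ₀)) (lt_irrefl κ)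

end Sierp

/-- P2: weakly compact implies strong limit -/
theorem strong_limit_of_wc (hwc : IsWeaklyCompact κ) : ∀ μ, μ < κ → 2 ^ μ < κ := by
  obtain ⟨h0, hpart⟩ := hwc
  have hreg := regular_of_wc ⟨h0, hpart⟩
  by_contra hc
  push_neg at hc
  obtain ⟨μ, hμlt, hμge⟩ := hc
  set T : Set Cardinal.{u} := {ν | κ ≤ 2 ^ ν} with hTdef
  have hTne : T.Nonempty := ⟨μ, hμge⟩
  set μ₀ := sInf T with hμ₀def
  have hμ₀T : μ₀ ∈ T := csInf_mem hTne
  have hμ₀le : μ₀ ≤ μ := csInf_le' hμge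
  have hμ₀lt : μ₀ < κ := lt_of_le_of_lt hμ₀le hμlt
  have hmin : ∀ ν, ν < μ₀ → 2 ^ ν < κ := by
    intro ν hν
    by_contra hcon
    push_neg at hcon
    exact absurd (csInf_le' (show ν ∈ T from hcon)) (not_le.mpr hν)
  -- the position type
  set σ := (Cardinal.ord μ₀).ToType with hσdef
  have hσmk : #σ = μ₀ := Cardinal.mk_ord_toType μ₀
  have hκle : κ ≤ #(Set σ) := by
    rw [Cardinal.mk_set, hσmk]
    exact hμ₀T
  rw [← mk_idx (κ := κ)] at hκle
  obtain ⟨emb⟩ := Cardinal.le_def _ _ |>.mp hκle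
  letI : ∀ p, Decidable p := fun p => Classical.propDecidable p
  set t : ι → σ → Bool := fun α ξ => decide (ξ ∈ emb α) with htdef
  have tinj : Function.Injective t := by
    intro a b hab
    apply emb.injective
    ext ξ
    have h1 : t a ξ = t b ξ := congrFun hab ξ
    rw [htdef] at h1
    simp only [decide_eq_decide] at h1
    exact h1
  obtain ⟨H, hHmk, hhom⟩ := hpart (fun a b => decide (LexLE (t a) (t b)))
  have hub := ubd_of_mk_eq h0 hHmk
  obtain ⟨a₀, ha₀, b₀, hb₀, hab₀⟩ := exists_pair h0 hub
  have hσlt : #σ < κ := by rw [hσmk]; exact hμ₀lt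
  have hpre2 : ∀ ξ : σ, 2 ^ #(Set.Iio ξ) < κ := by
    intro ξ
    exact hmin _ (Cardinal.mk_Iio_ord_toType ξ)
  rcases Bool.eq_false_or_eq_true (decide (LexLE (t a₀) (t b₀))) with hv | hv
  · have hmono : ∀ a ∈ H, ∀ b ∈ H, a < b → LexLE (t a) (t b) := by
      intro a ha b hb hab
      have h1 := hhom a ha b hb a₀ ha₀ b₀ hb₀ hab hab₀
      rw [hv] at h1
      exact of_decide_eq_true h1
    exact sierpinski_core h0 hreg hσlt hpre2 t tinj H hHmk hmono
  · -- decreasing case: negate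
    have hmono : ∀ a ∈ H, ∀ b ∈ H, a < b →
        LexLE (fun ξ => ! t a ξ) (fun ξ => ! t b ξ) := by
      intro a ha b hb hab
      have h1 := hhom a ha b hb a₀ ha₀ b₀ hb₀ hab hab₀
      rw [hv] at h1
      have h2 : ¬ LexLE (t a) (t b) := of_decide_eq_false h1
      rcases lex_total (t a) (t b) with h3 | h3
      · exact absurd h3 h2
      · exact Or.inr (lexLT_neg h3)
    exact sierpinski_core h0 hreg hσlt hpre2 (fun α ξ => ! t α ξ)
      (by
        intro a b hab
        apply tinj
        funext ξ
        have h4 := congrFun hab ξ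
        simpa using h4) H hHmk hmono

end WCproof

namespace WCproof

universe u
variable {κ : Cardinal.{u}}
local notation "ι" => Ordinal.ToType (Cardinal.ord κ)

theorem mk_boolfun_le (X : Type u) : #(X → Bool) ≤ 2 ^ #X := by
  rw [← Cardinal.mk_set]
  apply Cardinal.mk_le_of_injective (f := fun f : X → Bool => {x | f x = true})
  intro f g hfg
  funext x
  have h1 := Set.ext_iff.mp hfg x
  simp only [Set.mem_setOf_eq] at h1
  rcases Bool.eq_false_or_eq_true (f x) with h2 | h2 <;>
    rcases Bool.eq_false_or_eq_true (g x) with h3 | h3 <;>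
    simp [h2, h3] at h1 ⊢

theorem master_core (h0 : ℵ₀ < κ) (hreg : κ.IsRegular) (hsl : ∀ μ, μ < κ → 2 ^ μ < κ)
    (t : ι → ι → Bool) (H : Set ι) (hHmk : #H = κ)
    (hmono : ∀ a ∈ H, ∀ b ∈ H, a < b → LexLE (t a) (t b)) :
    ∃ bits : ι → Bool, ∀ lam bound : ι, ∃ α, bound < α ∧
      ∀ ξ, ξ < lam → t α ξ = bits ξ := by
  have hub := ubd_of_mk_eq h0 hHmk
  -- prefix maps
  set Pre : ∀ lam : ι, ι → (Set.Iio lam → Bool) := fun lam a => fun η => t a η.1 with hPredef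
  -- stabilized values
  have hzex : ∀ lam : ι, ∃ zz : Set.Iio lam → Bool, Ubd {x | x ∈ H ∧ Pre lam x = zz} := by
    intro lam
    apply exists_ubd_fiber h0 hreg (Pre lam) _ hub
    calc #(Set.Iio lam → Bool) ≤ 2 ^ #(Set.Iio lam) := mk_boolfun_le _
      _ < κ := hsl _ (mk_Iio_lt lam)
  choose z hz using hzex
  set fib : ι → Set ι := fun lam => {x | x ∈ H ∧ Pre lam x = z lam} with hfibdef
  -- convexity
  have hconv : ∀ lam : ι, ∀ a ∈ H, ∀ b ∈ H, ∀ c ∈ H, a < b → b < c →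
      Pre lam a = Pre lam c → Pre lam b = Pre lam a := by
    intro lam a ha b hb c hc hab hbc hac
    by_contra hne
    have hdne : {ξ : ι | t a ξ ≠ t b ξ}.Nonempty := by
      by_contra hcon
      rw [Set.not_nonempty_iff_eq_empty] at hcon
      refine hne (funext fun η => ?_)
      by_contra hne2
      have h3 : η.1 ∈ {ξ : ι | t a ξ ≠ t b ξ} := fun he => hne2 (by
        show Pre lam b η = Pre lam a η
        rw [hPredef]
        exact he.symm)
      rw [hcon] at h3
      exact h3
    set ξ := (IsWellFounded.wf (α := ι) (r := (· < ·))).min _ hdne with hξdef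
    have hξmem : t a ξ ≠ t b ξ := (IsWellFounded.wf).min_mem _ hdne
    have hξpre : ∀ η, η < ξ → t a η = t b η := by
      intro η hη
      by_contra hcon
      exact (IsWellFounded.wf).not_lt_min _ hcon hη
    -- ξ < lam
    have hξlt : ξ < lam := by
      have h4 : ∃ η : Set.Iio lam, t a η.1 ≠ t b η.1 := by
        by_contra hcon
        push_neg at hcon
        refine hne (funext fun η => ?_)
        show t b η.1 = t a η.1
        exact (hcon η).symm
      obtain ⟨η, hη⟩ := h4
      have h5 : ¬ η.1 < ξ := fun hlt => hη (hξpre η.1 hlt)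
      exact lt_of_le_of_lt (not_lt.mp h5) η.2
    -- analysis of hmono a b
    have hab2 := hmono a ha b hb hab
    have hfa : t a ξ = false ∧ t b ξ = true := by
      rcases hab2 with he | ⟨ζ, hp, hf, ht⟩
      · exact absurd (congrFun he ξ) hξmem
      · have hζξ : ζ = ξ := by
          rcases lt_trichotomy ζ ξ with h5 | h5 | h5
          · exact absurd (hξpre ζ h5) (by rw [hf, ht]; simp)
          · exact h5
          · exact absurd (hp ξ h5) hξmem
        rw [← hζξ]; exact ⟨hf, ht⟩
    have hca : t c ξ = false := by
      have := congrFun hac ⟨ξ, hξlt⟩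
      show t c ξ = false
      calc t c ξ = t a ξ := ((by exact this : Pre lam a ⟨ξ, hξlt⟩ = Pre lam c ⟨ξ, hξlt⟩)).symm
        _ = false := hfa.1
    -- analysis of hmono b c
    have hbc2 := hmono b hb c hc hbc
    rcases hbc2 with he | ⟨ζ₂, hp2, hf2, ht2⟩
    · have := congrFun he ξ
      rw [hfa.2, hca] at this
      exact Bool.noConfusion this
    · rcases lt_trichotomy ζ₂ ξ with h5 | h5 | h5
      · have e1 : t a ζ₂ = t b ζ₂ := hξpre ζ₂ h5
        have e2 : t a ζ₂ = t c ζ₂ := by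
          have := congrFun hac ⟨ζ₂, lt_trans h5 hξlt⟩
          exact this
        rw [e1, hf2] at e2
        rw [ht2] at e2
        exact Bool.noConfusion e2
      · rw [h5] at hf2
        rw [hfa.2] at hf2
        exact Bool.noConfusion hf2
      · have := hp2 ξ h5
        rw [hfa.2, hca] at this
        exact Bool.noConfusion this
  -- tails
  have htail : ∀ lam : ι, ∀ b ∈ H, (∃ a ∈ fib lam, a ≤ b) → b ∈ fib lam := by
    rintro lam b hb ⟨a, haf, hab⟩
    rcases eq_or_lt_of_le hab with he | hlt
    · rwa [← he]
    · obtain ⟨c, hcf, hbc⟩ := hz lam b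
      have h1 := hconv lam a haf.1 b hb c hcf.1 hlt hbc
        (by rw [haf.2, hcf.2])
      exact ⟨hb, by rw [h1, haf.2]⟩
  -- coherence
  have hcoh : ∀ lam lam' : ι, ∀ ξ : ι, ∀ h : ξ < lam, ∀ h' : ξ < lam',
      z lam ⟨ξ, h⟩ = z lam' ⟨ξ, h'⟩ := by
    intro lam lam' ξ h h'
    obtain ⟨i₀⟩ := nonempty_idx h0
    obtain ⟨a₁, ha₁, _⟩ := hz lam i₀
    obtain ⟨c, hcf', hac⟩ := hz lam' a₁
    have hcf : c ∈ fib lam := htail lam c hcf'.1 ⟨a₁, ha₁, hac.le⟩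
    calc z lam ⟨ξ, h⟩ = Pre lam c ⟨ξ, h⟩ := by rw [hcf.2]
      _ = t c ξ := rfl
      _ = Pre lam' c ⟨ξ, h'⟩ := rfl
      _ = z lam' ⟨ξ, h'⟩ := by rw [hcf'.2]
  -- define the bits
  have hlamex : ∀ ξ : ι, ∃ lam, ξ < lam := fun ξ => exists_gt h0 ξ
  choose lamf hlamf using hlamex
  refine ⟨fun ξ => z (lamf ξ) ⟨ξ, hlamf ξ⟩, ?_⟩
  intro lam₀ bound
  obtain ⟨α, hαf, hα⟩ := hz lam₀ bound
  refine ⟨α, hα, ?_⟩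
  intro ξ hξ
  calc t α ξ = Pre lam₀ α ⟨ξ, hξ⟩ := rfl
    _ = z lam₀ ⟨ξ, hξ⟩ := by rw [hαf.2]
    _ = z (lamf ξ) ⟨ξ, hlamf ξ⟩ := hcoh _ _ _ _ _

/-- The master lemma: a coherently-stabilized "ultrafilter-like" bit assignment for any
κ-indexed family of subsets of the index type. -/
theorem master (hwc : IsWeaklyCompact κ) (B : ι → Set ι) :
    ∃ bits : ι → Bool, ∀ lam bound : ι, ∃ α, bound < α ∧
      ∀ ξ, ξ < lam → ((α ∈ B ξ) ↔ bits ξ = true) := by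
  obtain ⟨h0, hpart⟩ := hwc
  have hreg := regular_of_wc ⟨h0, hpart⟩
  have hsl := strong_limit_of_wc ⟨h0, hpart⟩
  letI : ∀ p, Decidable p := fun p => Classical.propDecidable p
  set t : ι → ι → Bool := fun α ξ => decide (α ∈ B ξ) with htdef
  obtain ⟨H, hHmk, hhom⟩ := hpart (fun a b => decide (LexLE (t a) (t b)))
  have hub := ubd_of_mk_eq h0 hHmk
  obtain ⟨a₀, ha₀, b₀, hb₀, hab₀⟩ := exists_pair h0 hub
  have hmem : ∀ α ξ, (α ∈ B ξ) ↔ t α ξ = true := by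
    intro α ξ
    rw [htdef]
    simp
  rcases Bool.eq_false_or_eq_true (decide (LexLE (t a₀) (t b₀))) with hv | hv
  · have hmono : ∀ a ∈ H, ∀ b ∈ H, a < b → LexLE (t a) (t b) := by
      intro a ha b hb hab
      have h1 := hhom a ha b hb a₀ ha₀ b₀ hb₀ hab hab₀
      rw [hv] at h1
      exact of_decide_eq_true h1
    obtain ⟨bits, hbits⟩ := master_core h0 hreg hsl t H hHmk hmono
    refine ⟨bits, ?_⟩
    intro lam bound
    obtain ⟨α, hα, hα2⟩ := hbits lam bound
    exact ⟨α, hα, fun ξ hξ => by rw [hmem α ξ, hα2 ξ hξ]⟩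
  · have hmono : ∀ a ∈ H, ∀ b ∈ H, a < b →
        LexLE (fun ξ => ! t a ξ) (fun ξ => ! t b ξ) := by
      intro a ha b hb hab
      have h1 := hhom a ha b hb a₀ ha₀ b₀ hb₀ hab hab₀
      rw [hv] at h1
      have h2 : ¬ LexLE (t a) (t b) := of_decide_eq_false h1
      rcases lex_total (t a) (t b) with h3 | h3
      · exact absurd h3 h2
      · exact Or.inr (lexLT_neg h3)
    obtain ⟨bits, hbits⟩ := master_core h0 hreg hsl (fun α ξ => ! t α ξ) H hHmk hmono
    refine ⟨fun ξ => ! bits ξ, ?_⟩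
    intro lam bound
    obtain ⟨α, hα, hα2⟩ := hbits lam bound
    refine ⟨α, hα, fun ξ hξ => ?_⟩
    have h3 := hα2 ξ hξ
    rw [hmem α ξ]
    rcases Bool.eq_false_or_eq_true (bits ξ) with h4 | h4 <;>
      rcases Bool.eq_false_or_eq_true (t α ξ) with h5 | h5 <;>
      simp [h4, h5] at h3 ⊢

end WCproof

namespace WCproof

universe u

attribute [local instance] Classical.propDecidable

variable (κ : Cardinal.{u})
local notation "ι" => Ordinal.ToType (Cardinal.ord κ)

variable {P : Type u} [PartialOrder P] [Nonempty P]

/-- A "failure" of a suborder `A`: an antichain of `A`, predense in `A`,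
but not predense in `P` (with an incompatibility witness). -/
def FailPred (A X : Set P) : Prop :=
  X ⊆ A ∧ IsAntichainIn X ∧ (∀ p ∈ A, ∃ q ∈ X, Compat p q) ∧
    ∃ w : P, ∀ q ∈ X, ¬ Compat w q

noncomputable def failX (A : Set P) : Set P :=
  if h : ∃ X, FailPred A X then h.choose else ∅

noncomputable def failW (A : Set P) : P :=
  if h : ∃ X, FailPred A X then (h.choose_spec.2.2.2).choose else Classical.arbitrary P

theorem failX_spec {A : Set P} (h : ∃ X, FailPred A X) : FailPred A (failX A) := by
  rw [failX, dif_pos h]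
  exact h.choose_spec

theorem failW_spec {A : Set P} (h : ∃ X, FailPred A X) :
    ∀ q ∈ failX A, ¬ Compat (failW A) q := by
  rw [failX, failW, dif_pos h, dif_pos h]
  exact (h.choose_spec.2.2.2).choose_spec

variable (A₀ : Set P)

/-- the recursion adding failure witnesses -/
noncomputable def qf : ι → P := fun δ =>
  (IsWellFounded.wf (α := ι) (r := (· < ·))).fix
    (fun δ rec => failW (A₀ ∪ {p | ∃ γ, ∃ h : γ < δ, rec γ h = p})) δ

noncomputable def Aset (δ : ι) : Set P := A₀ ∪ {p | ∃ γ, γ < δ ∧ qf κ A₀ γ = p}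

noncomputable def AsetLe (γ : ι) : Set P := A₀ ∪ {p | ∃ β, β ≤ γ ∧ qf κ A₀ β = p}

noncomputable def Qset : Set P := A₀ ∪ Set.range (qf κ A₀)

theorem qf_eq (δ : ι) : qf κ A₀ δ = failW (Aset κ A₀ δ) := by
  show (IsWellFounded.wf (α := ι) (r := (· < ·))).fix _ δ = _
  rw [WellFounded.fix_eq]
  congr 1
  rw [Aset]
  congr 1
  ext p
  simp only [Set.mem_setOf_eq]
  constructor
  · rintro ⟨γ, h, he⟩; exact ⟨γ, h, he⟩
  · rintro ⟨γ, h, he⟩; exact ⟨γ, h, he⟩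

theorem A0_subset_Aset (δ : ι) : A₀ ⊆ Aset κ A₀ δ := Set.subset_union_left

theorem Aset_mono {γ δ : ι} (h : γ ≤ δ) : Aset κ A₀ γ ⊆ Aset κ A₀ δ := by
  apply Set.union_subset_union_right
  rintro p ⟨β, hβ, he⟩
  exact ⟨β, lt_of_lt_of_le hβ h, he⟩

theorem AsetLe_subset_Aset {γ δ : ι} (h : γ < δ) : AsetLe κ A₀ γ ⊆ Aset κ A₀ δ := by
  apply Set.union_subset_union_right
  rintro p ⟨β, hβ, he⟩
  exact ⟨β, lt_of_le_of_lt hβ h, he⟩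

theorem qf_mem_Aset {γ δ : ι} (h : γ < δ) : qf κ A₀ γ ∈ Aset κ A₀ δ :=
  Or.inr ⟨γ, h, rfl⟩

theorem qf_mem_AsetLe {β γ : ι} (h : β ≤ γ) : qf κ A₀ β ∈ AsetLe κ A₀ γ :=
  Or.inr ⟨β, h, rfl⟩

theorem Aset_subset_Qset (δ : ι) : Aset κ A₀ δ ⊆ Qset κ A₀ := by
  apply Set.union_subset_union_right
  rintro p ⟨β, _, he⟩
  exact ⟨β, he⟩

theorem AsetLe_subset_Qset (γ : ι) : AsetLe κ A₀ γ ⊆ Qset κ A₀ := by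
  apply Set.union_subset_union_right
  rintro p ⟨β, _, he⟩
  exact ⟨β, he⟩

theorem Aset_mem_cases {δ : ι} {p : P} (h : p ∈ Aset κ A₀ δ) :
    p ∈ A₀ ∨ ∃ γ, γ < δ ∧ qf κ A₀ γ = p := h

theorem mk_Aset_lt (h0 : ℵ₀ < κ) (hA₀ : #A₀ < κ) (δ : ι) : #(Aset κ A₀ δ) < κ := by
  have h1 : ({p | ∃ γ, γ < δ ∧ qf κ A₀ γ = p} : Set P) = qf κ A₀ '' Set.Iio δ := by
    ext p
    exact ⟨fun ⟨γ, h, he⟩ => ⟨γ, h, he⟩, fun ⟨γ, h, he⟩ => ⟨γ, h, he⟩⟩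
  calc #(Aset κ A₀ δ) ≤ #A₀ + #({p | ∃ γ, γ < δ ∧ qf κ A₀ γ = p} : Set P) :=
        Cardinal.mk_union_le _ _
    _ ≤ #A₀ + #(Set.Iio δ) := by
        rw [h1]
        exact add_le_add (le_refl _) (Cardinal.mk_image_le)
    _ < κ := Cardinal.add_lt_of_lt h0.le hA₀ (mk_Iio_lt δ)

theorem mk_AsetLe_lt (h0 : ℵ₀ < κ) (hA₀ : #A₀ < κ) (γ : ι) : #(AsetLe κ A₀ γ) < κ := by
  have h1 : ({p | ∃ β, β ≤ γ ∧ qf κ A₀ β = p} : Set P) = qf κ A₀ '' Set.Iic γ := by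
    ext p
    exact ⟨fun ⟨β, h, he⟩ => ⟨β, h, he⟩, fun ⟨β, h, he⟩ => ⟨β, h, he⟩⟩
  calc #(AsetLe κ A₀ γ) ≤ #A₀ + #({p | ∃ β, β ≤ γ ∧ qf κ A₀ β = p} : Set P) :=
        Cardinal.mk_union_le _ _
    _ ≤ #A₀ + #(Set.Iic γ) := by
        rw [h1]
        exact add_le_add (le_refl _) (Cardinal.mk_image_le)
    _ < κ := Cardinal.add_lt_of_lt h0.le hA₀ (mk_Iic_lt h0 γ)

theorem mk_Qset_le (hA₀ : #A₀ < κ) (h0 : ℵ₀ < κ) : #(Qset κ A₀ : Set P) ≤ κ := by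
  calc #(Qset κ A₀ : Set P) ≤ #A₀ + #(Set.range (qf κ A₀)) := Cardinal.mk_union_le _ _
    _ ≤ κ + κ := by
        apply add_le_add hA₀.le
        calc #(Set.range (qf κ A₀)) ≤ #ι := Cardinal.mk_range_le
          _ = κ := mk_idx
    _ = κ := Cardinal.add_eq_self h0.le

variable [Nonempty (Ordinal.ToType (Cardinal.ord κ))]

-- the stage-ordered least witness functions
noncomputable def uSet (a : P) (δ : ι) : Set ι :=
  {γ | ∃ p₁ ∈ failX (Aset κ A₀ δ), p₁ ∈ AsetLe κ A₀ γ ∧ Compat a p₁}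

noncomputable def uVal (a : P) (δ : ι) : ι :=
  if h : (uSet κ A₀ a δ).Nonempty then (IsWellFounded.wf (α := ι) (r := (· < ·))).min _ h
  else Classical.arbitrary ι

theorem uVal_mem {a : P} {δ : ι} (h : (uSet κ A₀ a δ).Nonempty) :
    uVal κ A₀ a δ ∈ uSet κ A₀ a δ := by
  rw [uVal, dif_pos h]
  exact (IsWellFounded.wf).min_mem _ h

theorem uVal_min {a : P} {δ : ι} (h : (uSet κ A₀ a δ).Nonempty) :
    ∀ γ ∈ uSet κ A₀ a δ, ¬ γ < uVal κ A₀ a δ := by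
  intro γ hγ
  rw [uVal, dif_pos h]
  exact (IsWellFounded.wf).not_lt_min _ hγ

-- witness choice within a fixed small stage, via a coding function eA
noncomputable def vSet (eA : ι → ι → P) (γ : ι) (a : P) (δ : ι) : Set ι :=
  {c | eA γ c ∈ failX (Aset κ A₀ δ) ∧ Compat a (eA γ c)}

noncomputable def vVal (eA : ι → ι → P) (γ : ι) (a : P) (δ : ι) : ι :=
  if h : (vSet κ A₀ eA γ a δ).Nonempty then (IsWellFounded.wf (α := ι) (r := (· < ·))).min _ h
  else Classical.arbitrary ι

theorem vVal_mem {eA : ι → ι → P} {γ : ι} {a : P} {δ : ι}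
    (h : (vSet κ A₀ eA γ a δ).Nonempty) :
    vVal κ A₀ eA γ a δ ∈ vSet κ A₀ eA γ a δ := by
  rw [vVal, dif_pos h]
  exact (IsWellFounded.wf).min_mem _ h

theorem vVal_min {eA : ι → ι → P} {γ : ι} {a : P} {δ : ι}
    (h : (vSet κ A₀ eA γ a δ).Nonempty) :
    ∀ c ∈ vSet κ A₀ eA γ a δ, ¬ c < vVal κ A₀ eA γ a δ := by
  intro c hc
  rw [vVal, dif_pos h]
  exact (IsWellFounded.wf).not_lt_min _ hc

end WCproof

namespace WCproof

universe u

attribute [local instance] Classical.propDecidable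

variable (κ : Cardinal.{u})
local notation "ι" => Ordinal.ToType (Cardinal.ord κ)
variable {P : Type u} [PartialOrder P] [Nonempty P] (A₀ : Set P)
variable [Nonempty (Ordinal.ToType (Cardinal.ord κ))]

noncomputable def evalL (l : List ↥(Qset κ A₀)) : ι → ι :=
  l.foldr (fun a f => fun α => uVal κ A₀ a.1 (f α)) id

theorem evalL_nil : evalL κ A₀ [] = id := rfl

theorem evalL_cons (a : ↥(Qset κ A₀)) (l : List ↥(Qset κ A₀)) (α : ι) :
    evalL κ A₀ (a :: l) α = uVal κ A₀ a.1 (evalL κ A₀ l α) := rfl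

def FIdxT : Type u :=
  (List ↥(Qset κ A₀)) ⊕ (((Ordinal.ToType (Cardinal.ord κ)) × ↥(Qset κ A₀) × List ↥(Qset κ A₀)) ⊕
    (Ordinal.ToType (Cardinal.ord κ)))

noncomputable def evalF (eA : ι → ι → P) : FIdxT κ A₀ → ι → ι
  | Sum.inl l => evalL κ A₀ l
  | Sum.inr (Sum.inl (γ, a, l)) => fun α => vVal κ A₀ eA γ a.1 (evalL κ A₀ l α)
  | Sum.inr (Sum.inr c) => fun _ => c

def CIdxT : Type u :=
  (↥(Qset κ A₀) × List ↥(Qset κ A₀)) ⊕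
    ((FIdxT κ A₀ × FIdxT κ A₀) ⊕ (FIdxT κ A₀ × FIdxT κ A₀))

noncomputable def coSet (eA : ι → ι → P) : CIdxT κ A₀ → Set ι
  | Sum.inl (y, l) => {α | y.1 ∈ failX (Aset κ A₀ (evalL κ A₀ l α))}
  | Sum.inr (Sum.inl (F, G)) => {α | evalF κ A₀ eA F α < evalF κ A₀ eA G α}
  | Sum.inr (Sum.inr (F, G)) => {α | evalF κ A₀ eA F α = evalF κ A₀ eA G α}

theorem mk_CIdxT_le (h0 : ℵ₀ < κ) (hA₀ : #A₀ < κ) : #(CIdxT κ A₀) ≤ κ := by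
  have hQ : #(↥(Qset κ A₀)) ≤ κ := mk_Qset_le κ A₀ hA₀ h0
  have hL : #(List ↥(Qset κ A₀)) ≤ κ := by
    calc #(List ↥(Qset κ A₀)) ≤ max ℵ₀ #(↥(Qset κ A₀)) := Cardinal.mk_list_le_max _
      _ ≤ κ := max_le h0.le hQ
  have hmul : ∀ a b : Cardinal.{u}, a ≤ κ → b ≤ κ → a * b ≤ κ := by
    intro a b ha hb
    exact Cardinal.mul_le_max a b |>.trans (by simp [max_le, h0.le, ha, hb, le_max_iff])
  have hadd : ∀ a b : Cardinal.{u}, a ≤ κ → b ≤ κ → a + b ≤ κ := fun a b ha hb =>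
    Cardinal.add_le_of_le h0.le ha hb
  have hι : #(Ordinal.ToType (Cardinal.ord κ)) ≤ κ := le_of_eq mk_idx
  have hF : #(FIdxT κ A₀) ≤ κ := by
    rw [FIdxT]
    simp only [Cardinal.mk_sum, Cardinal.mk_prod, Cardinal.lift_id]
    apply hadd _ _ hL
    apply hadd
    · exact hmul _ _ hι (hmul _ _ hQ hL)
    · exact hι
  rw [CIdxT]
  simp only [Cardinal.mk_sum, Cardinal.mk_prod, Cardinal.lift_id]
  apply hadd _ _ (hmul _ _ hQ hL)
  exact hadd _ _ (hmul _ _ hF hF) (hmul _ _ hF hF)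

theorem nonempty_CIdxT : Nonempty (CIdxT κ A₀) := ⟨Sum.inr (Sum.inr (Sum.inl [], Sum.inl []))⟩

theorem exists_surj_CIdxT (h0 : ℵ₀ < κ) (hA₀ : #A₀ < κ) :
    ∃ dec : ι → CIdxT κ A₀, Function.Surjective dec := by
  have h1 : #(CIdxT κ A₀) ≤ #ι := by rw [mk_idx]; exact mk_CIdxT_le κ A₀ h0 hA₀
  obtain ⟨emb⟩ := Cardinal.le_def _ _ |>.mp h1
  obtain ⟨c₀⟩ := nonempty_CIdxT κ A₀
  haveI : Nonempty (CIdxT κ A₀) := ⟨c₀⟩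
  exact ⟨Function.invFun emb, Function.invFun_surjective emb.injective⟩

theorem exists_surj_onto (β : Type u) [Nonempty β] (h : #β ≤ κ) :
    ∃ e : ι → β, Function.Surjective e := by
  have h1 : #β ≤ #ι := by rw [mk_idx]; exact h
  obtain ⟨emb⟩ := Cardinal.le_def _ _ |>.mp h1
  exact ⟨Function.invFun emb, Function.invFun_surjective emb.injective⟩

end WCproof

namespace WCproof

universe u

attribute [local instance] Classical.propDecidable

theorem mk_countable_iUnion_lt {P : Type u} (S : ℕ → Set P) (κ : Cardinal.{u})
    (hreg : κ.IsRegular) (h0 : ℵ₀ < κ)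
    (h : ∀ n, #(S n) < κ) : #(⋃ n, S n) < κ := by
  rw [← Cardinal.lift_uzero #(⋃ n, S n)]
  apply lt_of_le_of_lt (Cardinal.mk_iUnion_le_lift S)
  apply Cardinal.mul_lt_of_lt hreg.aleph0_le
  · rw [Cardinal.mk_nat, Cardinal.lift_aleph0]
    exact h0
  · apply Cardinal.iSup_lt_lift_of_isRegular hreg
    · rw [Cardinal.mk_nat, Cardinal.lift_aleph0]; exact h0
    · intro n
      rw [Cardinal.lift_uzero]
      exact h n

variable (κ : Cardinal.{u})
local notation "ι" => Ordinal.ToType (Cardinal.ord κ)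

theorem main_contra {P : Type u} [PartialOrder P] [Nonempty P]
    (hwc : IsWeaklyCompact κ)
    (hcc : ∀ A : Set P, IsAntichainIn A → #A < κ)
    (A₀ : Set P) (hA₀ : #A₀ < κ)
    (hno : ∀ A : Set P, #A < κ → A₀ ⊆ A → ∃ X, FailPred A X) : False := by
  obtain ⟨h0, hpart⟩ := hwc
  have hreg := regular_of_wc ⟨h0, hpart⟩
  haveI hni : Nonempty ι := nonempty_idx h0
  set i₀ : ι := Classical.arbitrary ι with hi₀def
  -- every stage fails
  have hfail : ∀ δ : ι, ∃ X, FailPred (Aset κ A₀ δ) X := fun δ =>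
    hno _ (mk_Aset_lt κ A₀ h0 hA₀ δ) (A0_subset_Aset κ A₀ δ)
  have hXsub : ∀ δ : ι, failX (Aset κ A₀ δ) ⊆ Aset κ A₀ δ := fun δ => (failX_spec (hfail δ)).1
  have hXanti : ∀ δ : ι, IsAntichainIn (failX (Aset κ A₀ δ)) := fun δ =>
    (failX_spec (hfail δ)).2.1
  have hXpre : ∀ δ : ι, ∀ p ∈ Aset κ A₀ δ, ∃ q ∈ failX (Aset κ A₀ δ), Compat p q := fun δ =>
    (failX_spec (hfail δ)).2.2.1
  have hqperp : ∀ δ : ι, ∀ y ∈ failX (Aset κ A₀ δ), ¬ Compat (qf κ A₀ δ) y := by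
    intro δ
    rw [qf_eq]
    exact failW_spec (hfail δ)
  -- the witness-stage function facts
  have hustrong : ∀ (a : P) (δ : ι), a ∈ Aset κ A₀ δ →
      ∃ γ ∈ uSet κ A₀ a δ, (i₀ < δ → γ < δ) := by
    intro a δ ha
    obtain ⟨x, hx, hcompat⟩ := hXpre δ a ha
    rcases Aset_mem_cases κ A₀ (hXsub δ hx) with hxA | ⟨β, hβ, he⟩
    · exact ⟨i₀, ⟨x, hx, Or.inl hxA, hcompat⟩, fun h => h⟩
    · refine ⟨β, ⟨x, hx, ?_, hcompat⟩, fun _ => hβ⟩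
      rw [← he]
      exact qf_mem_AsetLe κ A₀ (le_refl β)
  have hudef : ∀ (a : P) (δ : ι), a ∈ Aset κ A₀ δ → (uSet κ A₀ a δ).Nonempty := by
    intro a δ ha
    obtain ⟨γ, hγ, _⟩ := hustrong a δ ha
    exact ⟨γ, hγ⟩
  have hult : ∀ (a : P) (δ : ι), a ∈ Aset κ A₀ δ → i₀ < δ → uVal κ A₀ a δ < δ := by
    intro a δ ha hi
    obtain ⟨γ, hγ, hγlt⟩ := hustrong a δ ha
    have h1 := uVal_min κ A₀ (hudef a δ ha) γ hγ
    exact lt_of_le_of_lt (not_lt.mp h1) (hγlt hi)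
  -- the stage coding functions
  have heAex : ∀ γ : ι, ∃ e : ι → ↥(AsetLe κ A₀ γ), Function.Surjective e := by
    intro γ
    haveI : Nonempty ↥(AsetLe κ A₀ γ) := ⟨⟨qf κ A₀ γ, qf_mem_AsetLe κ A₀ (le_refl γ)⟩⟩
    exact exists_surj_onto κ _ (mk_AsetLe_lt κ A₀ h0 hA₀ γ).le
  choose eA0 heA0 using heAex
  set eA : ι → ι → P := fun γ c => (eA0 γ c).1 with heAdef
  have heAmem : ∀ γ c, eA γ c ∈ AsetLe κ A₀ γ := fun γ c => (eA0 γ c).2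
  have heAsurj : ∀ γ : ι, ∀ p ∈ AsetLe κ A₀ γ, ∃ c, eA γ c = p := by
    intro γ p hp
    obtain ⟨c, hc⟩ := heA0 γ ⟨p, hp⟩
    refine ⟨c, ?_⟩
    show (eA0 γ c).1 = p
    rw [hc]
  -- the coordinates and the master bits
  obtain ⟨dec, hdec⟩ := exists_surj_CIdxT κ A₀ h0 hA₀
  obtain ⟨bits, hbits⟩ := master ⟨h0, hpart⟩ (fun c => coSet κ A₀ eA (dec c))
  set enc : CIdxT κ A₀ → ι := fun F => (hdec F).choose with hencdef
  have henc : ∀ F, dec (enc F) = F := fun F => (hdec F).choose_spec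
  set bit : CIdxT κ A₀ → Bool := fun F => bits (enc F) with hbitdef
  -- the realizer workhorse
  have hreal : ∀ s : Set (CIdxT κ A₀), #s < κ → ∀ bound : ι, ∃ α, bound < α ∧
      ∀ F ∈ s, ((α ∈ coSet κ A₀ eA F) ↔ bit F = true) := by
    intro s hs bound
    obtain ⟨lam, hlam⟩ := bdd_range_of_small (κ := κ) hreg (fun F : s => enc F.1) hs
    obtain ⟨α, hα, hα2⟩ := hbits lam bound
    refine ⟨α, hα, ?_⟩
    intro F hF
    have h1 := hα2 (enc F) (hlam ⟨F, hF⟩)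
    rw [henc F] at h1
    exact h1
  -- coordinate abbreviations
  set Mco : ↥(Qset κ A₀) → List ↥(Qset κ A₀) → CIdxT κ A₀ :=
    fun y l => Sum.inl (y, l) with hMdef
  set Ltco : FIdxT κ A₀ → FIdxT κ A₀ → CIdxT κ A₀ :=
    fun F G => Sum.inr (Sum.inl (F, G)) with hLtdef
  set Eqco : FIdxT κ A₀ → FIdxT κ A₀ → CIdxT κ A₀ :=
    fun F G => Sum.inr (Sum.inr (F, G)) with hEqdef
  have hcoM : ∀ (y : ↥(Qset κ A₀)) (l : List ↥(Qset κ A₀)) (α : ι),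
      (α ∈ coSet κ A₀ eA (Mco y l)) ↔ y.1 ∈ failX (Aset κ A₀ (evalL κ A₀ l α)) :=
    fun _ _ _ => Iff.rfl
  have hcoLt : ∀ (F G : FIdxT κ A₀) (α : ι),
      (α ∈ coSet κ A₀ eA (Ltco F G)) ↔ evalF κ A₀ eA F α < evalF κ A₀ eA G α :=
    fun _ _ _ => Iff.rfl
  have hcoEq : ∀ (F G : FIdxT κ A₀) (α : ι),
      (α ∈ coSet κ A₀ eA (Eqco F G)) ↔ evalF κ A₀ eA F α = evalF κ A₀ eA G α :=
    fun _ _ _ => Iff.rfl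
  -- STEP A : the nil function is nonconstant
  set Ncl : Set (List ↥(Qset κ A₀)) :=
    {l | ∀ p : ι, bit (Eqco (Sum.inl l) (Sum.inr (Sum.inr p))) = false} with hNdef
  have hNnil : [] ∈ Ncl := by
    intro p
    by_contra hcon
    rw [Bool.not_eq_false] at hcon
    obtain ⟨α, hα, hα2⟩ := hreal {Eqco (Sum.inl []) (Sum.inr (Sum.inr p))}
      ((Set.finite_singleton _).lt_aleph0.trans h0) p
    have h1 := (hα2 _ rfl).mpr hcon
    replace h1 := (hcoEq _ _ _).mp h1
    have h2 : α = p := h1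
    rw [h2] at hα
    exact lt_irrefl p hα
  -- STEP B : minimal nonconstant function
  have hmin : ∃ h ∈ Ncl, ∀ g ∈ Ncl, bit (Ltco (Sum.inl g) (Sum.inl h)) ≠ true := by
    by_contra hcon
    push_neg at hcon
    have hstep : ∀ l : {l // l ∈ Ncl}, ∃ g : {l // l ∈ Ncl},
        bit (Ltco (Sum.inl g.1) (Sum.inl l.1)) = true := by
      intro l
      obtain ⟨g, hg, hgbit⟩ := hcon l.1 l.2
      exact ⟨⟨g, hg⟩, hgbit⟩
    choose step hstepspec using hstep
    set Fc : ℕ → {l // l ∈ Ncl} := fun n => Nat.rec ⟨[], hNnil⟩ (fun _ l => step l) n with hFdef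
    have hFc : ∀ n, bit (Ltco (Sum.inl (Fc (n+1)).1) (Sum.inl (Fc n).1)) = true := by
      intro n
      exact hstepspec (Fc n)
    set s : Set (CIdxT κ A₀) :=
      Set.range (fun n : ℕ => Ltco (Sum.inl (Fc (n+1)).1) (Sum.inl (Fc n).1)) with hsdef
    have hssmall : #s < κ := by
      haveI := (Set.countable_range
        (fun n : ℕ => Ltco (Sum.inl (Fc (n+1)).1) (Sum.inl (Fc n).1))).to_subtype
      exact lt_of_le_of_lt Cardinal.mk_le_aleph0 h0
    obtain ⟨α, hα, hα2⟩ := hreal s hssmall i₀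
    have hdesc : ∀ n : ℕ, evalL κ A₀ (Fc (n+1)).1 α < evalL κ A₀ (Fc n).1 α := by
      intro n
      have h1 := (hα2 _ ⟨n, rfl⟩).mpr (hFc n)
      replace h1 := (hcoLt _ _ _).mp h1
      exact h1
    -- no infinite descending sequence in a well-order
    have hne : (Set.range (fun n => evalL κ A₀ (Fc n).1 α)).Nonempty := ⟨_, 0, rfl⟩
    obtain ⟨n₀, hn₀⟩ := (IsWellFounded.wf (α := ι) (r := (· < ·))).min_mem _ hne
    have h2 := (IsWellFounded.wf (α := ι) (r := (· < ·))).not_lt_min (Set.range (fun n => evalL κ A₀ (Fc n).1 α))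
      (Set.mem_range_self (n₀ + 1))
    exact h2 (lt_of_lt_of_le (hdesc n₀) (le_of_eq hn₀))
  obtain ⟨hl, hhN, hhmin⟩ := hmin
  -- STEP C : the limit antichain
  set Yset : Set P := {y | ∃ hy : y ∈ Qset κ A₀, bit (Mco ⟨y, hy⟩ hl) = true} with hYdef
  have hYanti : IsAntichainIn Yset := by
    rintro y ⟨hy, hby⟩ y' ⟨hy', hby'⟩ hne hcompat
    obtain ⟨α, hα, hα2⟩ := hreal {Mco ⟨y, hy⟩ hl, Mco ⟨y', hy'⟩ hl}
      (((Set.finite_singleton _).insert _).lt_aleph0.trans h0) i₀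
    have h1 := (hα2 _ (Or.inl rfl)).mpr hby
    have h2 := (hα2 _ (Or.inr rfl)).mpr hby'
    rw [hcoM] at h1 h2
    exact hXanti (evalL κ A₀ hl α) y h1 y' h2 hne hcompat
  have hYsmall : #Yset < κ := hcc Yset hYanti
  -- get a stage where the whole antichain appears
  have hYcodes : #(Set.range (fun y : ↥Yset => Mco ⟨y.1, y.2.choose⟩ hl)) < κ :=
    lt_of_le_of_lt Cardinal.mk_range_le hYsmall
  obtain ⟨αs, hαs, hαs2⟩ := hreal _ hYcodes i₀
  set δs : ι := evalL κ A₀ hl αs with hδsdef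
  have hYsub : ∀ y ∈ Yset, y ∈ failX (Aset κ A₀ δs) := by
    intro y hy
    have h1 := (hαs2 _ (Set.mem_range_self (⟨y, hy⟩ : ↥Yset))).mpr
      (by
        have h2 : (⟨y, hy.choose⟩ : ↥(Qset κ A₀)) = ⟨y, hy.choose⟩ := rfl
        exact hy.choose_spec)
    rw [hcoM] at h1
    exact h1
  set q₀ : P := qf κ A₀ δs with hq₀def
  have hq₀Y : ∀ y ∈ Yset, ¬ Compat q₀ y := fun y hy => hqperp δs y (hYsub y hy)
  have hq₀Q : q₀ ∈ Qset κ A₀ := Or.inr ⟨δs, rfl⟩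
  -- STEP D : the minimal function is unbounded
  have hhub : ∀ γ : ι, bit (Ltco (Sum.inr (Sum.inr γ)) (Sum.inl hl)) = true := by
    intro γ
    by_contra hcon
    rw [Bool.not_eq_true] at hcon
    set s : Set (CIdxT κ A₀) := insert (Ltco (Sum.inr (Sum.inr γ)) (Sum.inl hl))
      (Set.range (fun p : ↥(Set.Iic γ) => Eqco (Sum.inl hl) (Sum.inr (Sum.inr p.1)))) with hsdef
    have hssmall : #s < κ := by
      apply lt_of_le_of_lt (Cardinal.mk_insert_le)
      apply Cardinal.add_lt_of_lt h0.le
      · exact lt_of_le_of_lt Cardinal.mk_range_le (mk_Iic_lt h0 γ)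
      · exact lt_trans Cardinal.one_lt_aleph0 h0
    obtain ⟨α, hα, hα2⟩ := hreal s hssmall i₀
    have h1 : ¬ (γ < evalL κ A₀ hl α) := by
      intro hlt
      have h2 := (hα2 _ (Set.mem_insert _ _)).mp ((hcoLt _ _ _).mpr hlt)
      rw [hcon] at h2
      exact Bool.noConfusion h2
    have h3 : evalL κ A₀ hl α ≤ γ := not_lt.mp h1
    have h4 := (hα2 _ (Set.mem_insert_of_mem _
      (Set.mem_range_self (⟨evalL κ A₀ hl α, h3⟩ : ↥(Set.Iic γ))))).mp
      ((hcoEq _ _ _).mpr rfl)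
    have h5 := hhN (evalL κ A₀ hl α)
    rw [h5] at h4
    exact Bool.noConfusion h4
  -- STEP E : the composed witness-stage function is regressive
  set l₁ : List ↥(Qset κ A₀) := ⟨q₀, hq₀Q⟩ :: hl with hl₁def
  have hregbit : bit (Ltco (Sum.inl l₁) (Sum.inl hl)) = true := by
    by_contra hcon
    rw [Bool.not_eq_true] at hcon
    obtain ⟨α, hα, hα2⟩ := hreal
      (insert (Ltco (Sum.inr (Sum.inr δs)) (Sum.inl hl))
        (insert (Ltco (Sum.inr (Sum.inr i₀)) (Sum.inl hl))
        {Ltco (Sum.inl l₁) (Sum.inl hl)}))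
      ((((Set.finite_singleton _).insert _).insert _).lt_aleph0.trans h0) i₀
    have h1 := (hα2 _ (Or.inl rfl)).mpr (hhub δs)
    have h2 := (hα2 _ (Or.inr (Or.inl rfl))).mpr (hhub i₀)
    replace h1 := (hcoLt _ _ _).mp h1
    replace h2 := (hcoLt _ _ _).mp h2
    have h3 : evalF κ A₀ eA (Sum.inr (Sum.inr δs)) α = δs := rfl
    have h4 : evalF κ A₀ eA (Sum.inl hl) α = evalL κ A₀ hl α := rfl
    rw [h3, h4] at h1
    have h5 : i₀ < evalL κ A₀ hl α := h2
    have hq₀mem : q₀ ∈ Aset κ A₀ (evalL κ A₀ hl α) := qf_mem_Aset κ A₀ h1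
    have h6 := hult q₀ (evalL κ A₀ hl α) hq₀mem h5
    have h7 := (hα2 _ (Or.inr (Or.inr rfl))).mp
      (by
        apply (hcoLt _ _ _).mpr
        show evalL κ A₀ l₁ α < evalL κ A₀ hl α
        rw [hl₁def, evalL_cons]
        exact h6)
    rw [hcon] at h7
    exact Bool.noConfusion h7
  -- STEP F : so it is constant
  have hl₁const : ∃ γs : ι, bit (Eqco (Sum.inl l₁) (Sum.inr (Sum.inr γs))) = true := by
    by_contra hcon
    push_neg at hcon
    have h1 : l₁ ∈ Ncl := by
      intro p
      rw [← Bool.not_eq_true]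
      exact hcon p
    exact hhmin l₁ h1 hregbit
  obtain ⟨γs, hγs⟩ := hl₁const
  -- STEP G : coding bound at stage γs
  have hlcne : ∀ p : ↥(AsetLe κ A₀ γs), {c : ι | eA γs c = p.1}.Nonempty := by
    intro p
    obtain ⟨c, hc⟩ := heAsurj γs p.1 p.2
    exact ⟨c, hc⟩
  set lc : ↥(AsetLe κ A₀ γs) → ι :=
    fun p => (IsWellFounded.wf (α := ι) (r := (· < ·))).min _ (hlcne p) with hlcdef
  have hlc : ∀ p, eA γs (lc p) = p.1 :=
    fun p => (IsWellFounded.wf).min_mem _ (hlcne p)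
  obtain ⟨b₁, hb₁⟩ := bdd_range_of_small (κ := κ) hreg lc (mk_AsetLe_lt κ A₀ h0 hA₀ γs)
  have hkey : ∀ δ : ι, q₀ ∈ Aset κ A₀ δ → uVal κ A₀ q₀ δ = γs →
      (vSet κ A₀ eA γs q₀ δ).Nonempty ∧ vVal κ A₀ eA γs q₀ δ < b₁ := by
    intro δ hq hu
    have hne := hudef q₀ δ hq
    obtain ⟨p₁, hp₁X, hp₁A, hp₁c⟩ := uVal_mem κ A₀ hne
    rw [hu] at hp₁A
    set c : ι := lc ⟨p₁, hp₁A⟩ with hcdef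
    have hcv : c ∈ vSet κ A₀ eA γs q₀ δ := by
      constructor
      · rw [hcdef, hlc ⟨p₁, hp₁A⟩]
        exact hp₁X
      · rw [hcdef, hlc ⟨p₁, hp₁A⟩]
        exact hp₁c
    refine ⟨⟨c, hcv⟩, ?_⟩
    have h1 := vVal_min κ A₀ ⟨c, hcv⟩ c hcv
    exact lt_of_le_of_lt (not_lt.mp h1) (hb₁ _)
  -- STEP H : the chosen witness code is constant
  set vF : FIdxT κ A₀ := Sum.inr (Sum.inl (γs, ⟨q₀, hq₀Q⟩, hl)) with hvFdef
  have hvF : ∀ α : ι, evalF κ A₀ eA vF α = vVal κ A₀ eA γs q₀ (evalL κ A₀ hl α) := fun _ => rfl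
  have hvconst : ∃ ps : ι, bit (Eqco vF (Sum.inr (Sum.inr ps))) = true := by
    by_contra hcon
    push_neg at hcon
    set s : Set (CIdxT κ A₀) :=
      insert (Ltco (Sum.inr (Sum.inr δs)) (Sum.inl hl))
      (insert (Ltco (Sum.inr (Sum.inr i₀)) (Sum.inl hl))
      (insert (Eqco (Sum.inl l₁) (Sum.inr (Sum.inr γs)))
      (Set.range (fun p : ↥(Set.Iio b₁) => Eqco vF (Sum.inr (Sum.inr p.1)))))) with hsdef
    have hssmall : #s < κ := by
      apply lt_of_le_of_lt (Cardinal.mk_insert_le)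
      apply Cardinal.add_lt_of_lt h0.le _ (lt_trans Cardinal.one_lt_aleph0 h0)
      apply lt_of_le_of_lt (Cardinal.mk_insert_le)
      apply Cardinal.add_lt_of_lt h0.le _ (lt_trans Cardinal.one_lt_aleph0 h0)
      apply lt_of_le_of_lt (Cardinal.mk_insert_le)
      apply Cardinal.add_lt_of_lt h0.le _ (lt_trans Cardinal.one_lt_aleph0 h0)
      exact lt_of_le_of_lt Cardinal.mk_range_le (mk_Iio_lt b₁)
    obtain ⟨α, hα, hα2⟩ := hreal s hssmall i₀
    have h1 := (hα2 _ (Set.mem_insert _ _)).mpr (hhub δs)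
    have h2 := (hα2 _ (Set.mem_insert_of_mem _ (Set.mem_insert _ _))).mpr (hhub i₀)
    have h3 := (hα2 _ (Set.mem_insert_of_mem _ (Set.mem_insert_of_mem _
      (Set.mem_insert _ _)))).mpr hγs
    replace h1 := (hcoLt _ _ _).mp h1
    replace h2 := (hcoLt _ _ _).mp h2
    replace h3 := (hcoEq _ _ _).mp h3
    have h1' : δs < evalL κ A₀ hl α := h1
    have h2' : i₀ < evalL κ A₀ hl α := h2
    have h3' : uVal κ A₀ q₀ (evalL κ A₀ hl α) = γs := by
      have := h3
      rw [show evalF κ A₀ eA (Sum.inl l₁) α = evalL κ A₀ l₁ α from rfl] at this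
      rw [hl₁def, evalL_cons] at this
      exact this
    have hq₀mem : q₀ ∈ Aset κ A₀ (evalL κ A₀ hl α) := qf_mem_Aset κ A₀ h1'
    obtain ⟨hvne, hvlt⟩ := hkey (evalL κ A₀ hl α) hq₀mem h3'
    have h4 := (hα2 _ (Set.mem_insert_of_mem _ (Set.mem_insert_of_mem _
      (Set.mem_insert_of_mem _
        (Set.mem_range_self (⟨vVal κ A₀ eA γs q₀ (evalL κ A₀ hl α), hvlt⟩ : ↥(Set.Iio b₁))))))).mp
      ((hcoEq _ _ _).mpr (by rw [hvF]; rfl))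

    have h5 := hcon (vVal κ A₀ eA γs q₀ (evalL κ A₀ hl α))
    rw [h4] at h5
    exact h5 rfl
  obtain ⟨ps, hps⟩ := hvconst
  -- STEP I : the final clash
  set ys : P := eA γs ps with hysdef
  have hysQ : ys ∈ Qset κ A₀ := AsetLe_subset_Qset κ A₀ γs (heAmem γs ps)
  obtain ⟨α, hα, hα2⟩ := hreal
    (insert (Ltco (Sum.inr (Sum.inr δs)) (Sum.inl hl))
    (insert (Ltco (Sum.inr (Sum.inr i₀)) (Sum.inl hl))
    (insert (Eqco (Sum.inl l₁) (Sum.inr (Sum.inr γs)))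
    (insert (Eqco vF (Sum.inr (Sum.inr ps)))
    {Mco ⟨ys, hysQ⟩ hl}))))
    (by
      apply lt_of_le_of_lt (Cardinal.mk_insert_le)
      apply Cardinal.add_lt_of_lt h0.le _ (lt_trans Cardinal.one_lt_aleph0 h0)
      apply lt_of_le_of_lt (Cardinal.mk_insert_le)
      apply Cardinal.add_lt_of_lt h0.le _ (lt_trans Cardinal.one_lt_aleph0 h0)
      apply lt_of_le_of_lt (Cardinal.mk_insert_le)
      apply Cardinal.add_lt_of_lt h0.le _ (lt_trans Cardinal.one_lt_aleph0 h0)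
      apply lt_of_le_of_lt (Cardinal.mk_insert_le)
      apply Cardinal.add_lt_of_lt h0.le _ (lt_trans Cardinal.one_lt_aleph0 h0)
      exact lt_of_le_of_lt (le_of_eq (Cardinal.mk_singleton _))
        (lt_trans Cardinal.one_lt_aleph0 h0)) i₀
  have h1 := (hα2 _ (Set.mem_insert _ _)).mpr (hhub δs)
  have h2 := (hα2 _ (Set.mem_insert_of_mem _ (Set.mem_insert _ _))).mpr (hhub i₀)
  have h3 := (hα2 _ (Set.mem_insert_of_mem _ (Set.mem_insert_of_mem _
    (Set.mem_insert _ _)))).mpr hγs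
  have h4 := (hα2 _ (Set.mem_insert_of_mem _ (Set.mem_insert_of_mem _
    (Set.mem_insert_of_mem _ (Set.mem_insert _ _))))).mpr hps
  replace h1 := (hcoLt _ _ _).mp h1
  replace h2 := (hcoLt _ _ _).mp h2
  replace h3 := (hcoEq _ _ _).mp h3
  replace h4 := (hcoEq _ _ _).mp h4
  have h1' : δs < evalL κ A₀ hl α := h1
  have h2' : i₀ < evalL κ A₀ hl α := h2
  have h3' : uVal κ A₀ q₀ (evalL κ A₀ hl α) = γs := by
    have := h3
    rw [show evalF κ A₀ eA (Sum.inl l₁) α = evalL κ A₀ l₁ α from rfl] at this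
    rw [hl₁def, evalL_cons] at this
    exact this
  have hq₀mem : q₀ ∈ Aset κ A₀ (evalL κ A₀ hl α) := qf_mem_Aset κ A₀ h1'
  obtain ⟨hvne, _⟩ := hkey (evalL κ A₀ hl α) hq₀mem h3'
  have h4' : vVal κ A₀ eA γs q₀ (evalL κ A₀ hl α) = ps := by
    have := h4
    rw [hvF] at this
    exact this
  obtain ⟨hmemX, hcompat⟩ := vVal_mem κ A₀ hvne
  rw [h4'] at hmemX hcompat
  -- hmemX : eA γs ps ∈ failX (Aset ...) ; hcompat : Compat q₀ (eA γs ps)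
  have h5 : α ∈ coSet κ A₀ eA (Mco ⟨ys, hysQ⟩ hl) := by
    rw [hcoM]
    exact hmemX
  have h6 := (hα2 _ (Set.mem_insert_of_mem _ (Set.mem_insert_of_mem _
    (Set.mem_insert_of_mem _ (Set.mem_insert_of_mem _ rfl))))).mp h5
  have h7 : ys ∈ Yset := ⟨hysQ, h6⟩
  exact hq₀Y ys h7 hcompat

end WCproof


/-- Suppose `κ` is weakly compact and `P` is a `κ`-cc forcing notion.  A `P`-name `ẋ` for
a real is given by countably many (maximal) antichains `x n m` (the conditions forcing
`ẋ(n) = m`).  Then there is a complete suborder `A ⊆ P` of size `< κ` such that `ẋ` is an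
`A`-name: `A` contains all the antichains of the name, and every maximal antichain of `A`
is a maximal antichain of `P`. -/
theorem name_captured_by_small_complete_suborder {P : Type u} [PartialOrder P]
    (κ : Cardinal.{u}) (hwc : IsWeaklyCompact κ)
    (hcc : ∀ A : Set P, IsAntichainIn A → Cardinal.mk A < κ)
    (x : ℕ → ℕ → Set P)
    (hanti : ∀ n, IsAntichainIn (⋃ m, x n m))
    (hmax : ∀ n, ∀ p : P, ∃ q ∈ ⋃ m, x n m, Compat p q) :
    ∃ A : Set P, Cardinal.mk A < κ ∧ (∀ n m, x n m ⊆ A) ∧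
      ∀ X ⊆ A, IsAntichainIn X → (∀ p ∈ A, ∃ q ∈ X, Compat p q) →
        ∀ p : P, ∃ q ∈ X, Compat p q := by
  classical
  have h0 := hwc.1
  have hreg := WCproof.regular_of_wc hwc
  by_cases hP : Nonempty P
  case neg =>
    refine ⟨∅, ?_, ?_, ?_⟩
    · rw [Cardinal.mk_emptyCollection]
      exact lt_trans Cardinal.aleph0_pos h0
    · intro n m p hp
      exact absurd ⟨p⟩ hP
    · intro X _ _ _ p
      exact absurd ⟨p⟩ hP
  case pos =>
    haveI := hP
    by_contra hcon
    push_neg at hcon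
    set A₀ : Set P := ⋃ n, ⋃ m, x n m with hA₀def
    have hA₀ : Cardinal.mk A₀ < κ :=
      WCproof.mk_countable_iUnion_lt _ κ hreg h0 (fun n => hcc _ (hanti n))
    apply WCproof.main_contra κ hwc hcc A₀ hA₀
    intro A hA hsub
    have hx : ∀ n m, x n m ⊆ A := fun n m =>
      subset_trans (subset_trans (Set.subset_iUnion (fun m => x n m) m)
        (Set.subset_iUnion (fun n => ⋃ m, x n m) n)) hsub
    obtain ⟨X, hX1, hX2, hX3, p, hp⟩ := hcon A hA hx
    exact ⟨X, hX1, hX2, hX3, p, hp⟩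
end

section
/- Let κ be weakly compact and P a partial order satisfying the κ-chain condition, with |P| arbitrary. Given any family of fewer than κ many antichains of P, each of size < κ, there exists A ⊆ P of size < κ containing all these antichains such that every maximal antichain of P that is a subset of A remains maximal in P, and A is an elementary substructure of P for the dense-set structure. -/
set_option linter.unusedSectionVars false

open Set Cardinal

universe u

namespace WCAux

section Lex
variable {W : Type u} [LinearOrder W] [WellFoundedLT W]

/-- Strict lexicographic order on Bool-valued sequences over a well-ordered index. -/
def LexLT (f g : W → Bool) : Prop := ∃ i, (∀ j, j < i → f j = g j) ∧ f i < g i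

theorem LexLT.ne {f g : W → Bool} (h : LexLT f g) : f ≠ g := by
  rintro rfl
  obtain ⟨i, -, hi⟩ := h
  exact lt_irrefl _ hi

theorem lexLT_total {f g : W → Bool} (h : f ≠ g) : LexLT f g ∨ LexLT g f := by
  have hne : {i | f i ≠ g i}.Nonempty := by
    by_contra hc
    rw [not_nonempty_iff_eq_empty] at hc
    refine h (funext fun i => ?_)
    by_contra hi
    exact absurd (hc ▸ hi : i ∈ ({} : Set W)) (by simp)
  obtain ⟨i, hi, hmin⟩ := (wellFounded_lt (α := W)).has_min _ hne
  have hag : ∀ j, j < i → f j = g j := fun j hj => by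
    by_contra hj'
    exact hmin j hj' hj
  rcases Ne.lt_or_gt hi with h1 | h1
  · exact Or.inl ⟨i, hag, h1⟩
  · exact Or.inr ⟨i, fun j hj => (hag j hj).symm, h1⟩

theorem lexLT_asymm {f g : W → Bool} (h1 : LexLT f g) (h2 : LexLT g f) : False := by
  obtain ⟨i, ha, hi⟩ := h1
  obtain ⟨i', hb, hi'⟩ := h2
  rcases lt_trichotomy i i' with hc | hc | hc
  · rw [hb i hc] at hi
    exact lt_irrefl _ hi
  · subst hc
    exact lt_irrefl _ (hi.trans hi')
  · rw [ha i' hc] at hi'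
    exact lt_irrefl _ hi'

theorem lexLT_trans {f g h : W → Bool} (h1 : LexLT f g) (h2 : LexLT g h) : LexLT f h := by
  obtain ⟨i, ha, hi⟩ := h1
  obtain ⟨i', hb, hi'⟩ := h2
  rcases lt_trichotomy i i' with hc | hc | hc
  · exact ⟨i, fun j hj => (ha j hj).trans (hb j (hj.trans hc)), (hb i hc) ▸ hi⟩
  · subst hc
    exact ⟨i, fun j hj => (ha j hj).trans (hb j hj), hi.trans hi'⟩
  · exact ⟨i', fun j hj => (ha j (hj.trans hc)).trans (hb j hj), (ha i' hc) ▸ hi'⟩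

/-- Non-strict lexicographic order. -/
def LexLE (f g : W → Bool) : Prop := LexLT f g ∨ f = g

theorem LexLE.refl (f : W → Bool) : LexLE f f := Or.inr rfl

theorem lexLT_of_lexLE_of_lexLT {f g h : W → Bool} (h1 : LexLE f g) (h2 : LexLT g h) :
    LexLT f h := by
  rcases h1 with h1 | rfl
  · exact lexLT_trans h1 h2
  · exact h2

theorem lexLT_of_lexLT_of_lexLE {f g h : W → Bool} (h1 : LexLT f g) (h2 : LexLE g h) :
    LexLT f h := by
  rcases h2 with h2 | rfl
  · exact lexLT_trans h1 h2
  · exact h1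

/-- The sandwich lemma: if `f ≤ g ≤ h` lexicographically and `f` and `h` agree below `α`,
then so do `f` and `g`. -/
theorem lex_sandwich {f g h : W → Bool} {α : W} (h1 : LexLE f g) (h2 : LexLE g h)
    (hfh : ∀ j, j < α → f j = h j) : ∀ j, j < α → f j = g j := by
  rcases h1 with h1 | rfl
  swap
  · exact fun j _ => rfl
  rcases h2 with h2 | rfl
  swap
  · exact fun j hj => hfh j hj
  obtain ⟨i, ha, hi⟩ := h1
  obtain ⟨i', hb, hi'⟩ := h2
  have hialpha : ¬ i < α := by
    intro hia
    rcases lt_trichotomy i' i with hc | hc | hc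
    · -- f i' = g i' < h i' = f i'
      have e1 : f i' = g i' := ha i' hc
      have e2 : f i' = h i' := hfh i' (hc.trans hia)
      have e3 : g i' = h i' := by rw [← e1]; exact e2
      rw [e3] at hi'
      exact lt_irrefl _ hi'
    · rw [hc] at hi'
      have e2 : f i = h i := hfh i hia
      have h4 : f i < h i := hi.trans hi'
      rw [e2] at h4
      exact lt_irrefl _ h4
    · -- i < i' : h i = g i, f i < g i, f i = h i
      have e1 : g i = h i := hb i hc
      have e2 : f i = h i := hfh i hia
      rw [← e1] at e2
      rw [e2] at hi
      exact lt_irrefl _ hi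
  exact fun j hj => ha j (hj.trans_le (not_lt.mp hialpha))

theorem lexLT_not_not {f g : W → Bool} :
    LexLT (fun i => !(f i)) (fun i => !(g i)) ↔ LexLT g f := by
  constructor
  · rintro ⟨i, ha, hi⟩
    refine ⟨i, fun j hj => Bool.not_inj ((ha j hj).symm :), ?_⟩
    rw [Bool.lt_iff] at hi ⊢
    simp only [Bool.not_eq_false', Bool.not_eq_true'] at hi
    exact ⟨hi.2, hi.1⟩
  · rintro ⟨i, ha, hi⟩
    refine ⟨i, fun j hj => by show (!(f j)) = (!(g j)); rw [← ha j hj], ?_⟩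
    rw [Bool.lt_iff] at hi ⊢
    simp [hi.1, hi.2]

theorem lexLT_at_min {W : Type u} [LinearOrder W] {f g : W → Bool} {d : W}
    (h : LexLT f g) (hne : f d ≠ g d) (hag : ∀ t, t < d → f t = g t) : f d < g d := by
  obtain ⟨i, hia, hilt⟩ := h
  rcases lt_trichotomy i d with h1 | h1 | h1
  · exact absurd (hag i h1) (ne_of_lt hilt)
  · exact h1 ▸ hilt
  · exact absurd (hia d h1) hne

end Lex

section WC
variable {κ : Cardinal.{u}}

theorem mk_ordToType (κ : Cardinal.{u}) : #κ.ord.ToType = κ := by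
  rw [Cardinal.mk_toType, Cardinal.card_ord]

theorem mk_arrow_bool (W : Type u) : #(W → Bool) = (2 : Cardinal.{u}) ^ #W := by
  have h1 : #(W → Bool) = #(Set W) :=
    Cardinal.mk_congr (Equiv.arrowCongr (Equiv.refl W) Equiv.propEquivBool.symm)
  rw [h1, Cardinal.mk_set]

theorem mk_Iic_lt (hκ : ℵ₀ ≤ κ) (x : κ.ord.ToType) : #(Set.Iic x) < κ := by
  have h1 : (Set.Iic x : Set κ.ord.ToType) = insert x (Set.Iio x) := (Set.Iio_insert).symm
  rw [h1]
  refine lt_of_le_of_lt (Cardinal.mk_insert_le) ?_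
  exact Cardinal.add_lt_of_lt hκ (Cardinal.mk_Iio_ord_toType x) (one_lt_aleph0.trans_le hκ)

/-- Small families in `κ.ord.ToType` are bounded. -/
theorem bddAbove_of_small (hwc : IsWeaklyCompact κ) {ι : Type u} (f : ι → κ.ord.ToType)
    (hι : #ι < κ) : ∃ x, ∀ i, f i ≤ x := by
  classical
  by_contra hc
  push_neg at hc
  choose blk hblk' using hc
  obtain ⟨H, hHcard, hH⟩ := hwc.2 (fun a b => decide (blk a = blk b))
  by_cases hcase : ∃ a ∈ H, ∃ b ∈ H, a < b ∧ blk a = blk b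
  · obtain ⟨a₀, ha₀, b₀, hb₀, hab₀, heq₀⟩ := hcase
    have key : ∀ a ∈ H, ∀ b ∈ H, a < b → blk a = blk b := by
      intro a ha b hb hab
      have := hH a ha b hb a₀ ha₀ b₀ hb₀ hab hab₀
      rw [decide_eq_decide] at this
      exact this.mpr heq₀
    have hall : ∀ a ∈ H, blk a = blk a₀ := by
      intro a ha
      rcases lt_trichotomy a a₀ with h1 | h1 | h1
      · exact key a ha a₀ ha₀ h1
      · rw [h1]
      · exact (key a₀ ha₀ a ha h1).symm
    have hsub : H ⊆ Set.Iio (f (blk a₀)) := by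
      intro a ha
      have := hblk' a
      rwa [hall a ha] at this
    have := (Cardinal.mk_le_mk_of_subset hsub).trans_lt (Cardinal.mk_Iio_ord_toType _)
    rw [hHcard] at this
    exact lt_irrefl _ this
  · push_neg at hcase
    have hinj : Function.Injective (fun a : ↑H => blk ↑a) := by
      intro a b hab
      have hab' : blk ↑a = blk ↑b := hab
      by_contra hne
      have hne' : (a : κ.ord.ToType) ≠ ↑b := fun h => hne (Subtype.ext h)
      rcases hne'.lt_or_gt with h1 | h1
      · exact hcase ↑a a.2 ↑b b.2 h1 hab'
      · exact hcase ↑b b.2 ↑a a.2 h1 hab'.symm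
    have := (Cardinal.mk_le_of_injective hinj).trans_lt hι
    rw [hHcard] at this
    exact lt_irrefl _ this

theorem bddAbove_of_small_set (hwc : IsWeaklyCompact κ) (S : Set κ.ord.ToType)
    (hS : #S < κ) : ∃ x, ∀ s ∈ S, s ≤ x := by
  obtain ⟨x, hx⟩ := bddAbove_of_small hwc (fun s : ↑S => (s : κ.ord.ToType)) hS
  exact ⟨x, fun s hs => hx ⟨s, hs⟩⟩

theorem isRegular_of_wc (hwc : IsWeaklyCompact κ) : Cardinal.IsRegular κ := by
  refine ⟨hwc.1.le, ?_⟩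
  by_contra hreg
  push_neg at hreg
  obtain ⟨S, hUnb, hScard⟩ := Order.exists_cof_eq (α := κ.ord.ToType)
  rw [Ordinal.cof_toType] at hScard
  have hSlt : #S < κ := by rw [hScard]; exact hreg
  obtain ⟨x, hx⟩ := bddAbove_of_small_set hwc S hSlt
  haveI : NoMaxOrder κ.ord.ToType := Cardinal.noMaxOrder hwc.1.le
  obtain ⟨y, hy⟩ := exists_gt x
  obtain ⟨b, hbS, hb⟩ := hUnb y
  exact absurd (lt_of_le_of_lt (hx b hbS) hy) (not_lt.mpr hb)

end WC

section StrongLimit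
variable {κ : Cardinal.{u}}

theorem no_monotone_chain (hwc : IsWeaklyCompact κ) {ν : Cardinal.{u}} (hν : ℵ₀ ≤ ν)
    (hνκ : ν < κ) (hmin : ∀ μ' : Cardinal.{u}, μ' < ν → (2 : Cardinal.{u}) ^ μ' < κ)
    (G : κ.ord.ToType → ν.ord.ToType → Bool) (H : Set κ.ord.ToType) (hHcard : #H = κ)
    (hmono : ∀ a ∈ H, ∀ b ∈ H, a < b → LexLT (G a) (G b)) : False := by
  classical
  have hreg := isRegular_of_wc hwc
  -- successor function in H
  have hex : ∀ a : ↑H, ∃ b : ↑H, (↑a < ↑b) ∧ ∀ c : ↑H, ↑a < ↑c → ↑b ≤ (c : κ.ord.ToType) := by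
    intro a
    have hne : {b : κ.ord.ToType | b ∈ H ∧ ↑a < b}.Nonempty := by
      by_contra hc
      rw [not_nonempty_iff_eq_empty] at hc
      have hsub : H ⊆ Set.Iic ↑a := by
        intro b hb
        by_contra hble
        have : b ∈ {b : κ.ord.ToType | b ∈ H ∧ ↑a < b} := ⟨hb, not_le.mp hble⟩
        rw [hc] at this
        exact this
      have := (Cardinal.mk_le_mk_of_subset hsub).trans_lt (mk_Iic_lt hwc.1.le ↑a)
      rw [hHcard] at this
      exact lt_irrefl _ this
    obtain ⟨b, ⟨hbH, hab⟩, hmin'⟩ := (wellFounded_lt).has_min _ hne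
    exact ⟨⟨b, hbH⟩, hab, fun c hc => not_lt.mp (hmin' ↑c ⟨c.2, hc⟩)⟩
  choose nxt hnxt1 hnxt2 using hex
  -- least difference
  have hdiff : ∀ a : ↑H, ∃ d : ν.ord.ToType,
      (G ↑a d ≠ G ↑(nxt a) d) ∧ ∀ t, t < d → G ↑a t = G ↑(nxt a) t := by
    intro a
    have hltG : LexLT (G ↑a) (G ↑(nxt a)) := hmono ↑a a.2 ↑(nxt a) (nxt a).2 (hnxt1 a)
    have hne : {t : ν.ord.ToType | G ↑a t ≠ G ↑(nxt a) t}.Nonempty := by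
      by_contra hc
      rw [not_nonempty_iff_eq_empty] at hc
      refine hltG.ne (funext fun t => ?_)
      by_contra ht
      exact absurd (hc ▸ ht : t ∈ (∅ : Set ν.ord.ToType)) (by simp)
    obtain ⟨d, hd1, hd2⟩ := (wellFounded_lt).has_min _ hne
    refine ⟨d, hd1, fun t ht => ?_⟩
    by_contra ht'
    exact hd2 t ht' ht
  choose δ hδne hδag using hdiff
  -- the padding function
  let Pad : (Σ d : ν.ord.ToType, (↑(Set.Iic d) → Bool)) → (ν.ord.ToType → Bool) :=
    fun p t => if h : t ≤ p.1 then p.2 ⟨t, h⟩ else false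
  let Φ : ↑H → Σ d : ν.ord.ToType, (↑(Set.Iic d) → Bool) :=
    fun a => ⟨δ a, fun s => G ↑(nxt a) ↑s⟩
  have key : ∀ a b : ↑H, ↑a < (b : κ.ord.ToType) → Φ a = Φ b → False := by
    intro a b hab heq
    have h1 : δ a = δ b := congrArg Sigma.fst heq
    have hq : Pad (Φ a) = Pad (Φ b) := congrArg Pad heq
    set d := δ a with hd
    set q := Pad (Φ a) with hqdef
    have hqa : ∀ t, t ≤ d → q t = G ↑(nxt a) t := by
      intro t ht
      simp only [hqdef, Pad, Φ, dif_pos (show t ≤ δ a from ht)]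
    have hqb : ∀ t, t ≤ d → q t = G ↑(nxt b) t := by
      intro t ht
      rw [hq]
      have ht' : t ≤ δ b := h1 ▸ ht
      simp only [Pad, Φ, dif_pos ht']
    have hqf : ∀ t, ¬ t ≤ d → q t = false := by
      intro t ht
      simp only [hqdef, Pad, Φ, dif_neg (show ¬ t ≤ δ a from ht)]
    -- q ≤ G (nxt a)
    have h2 : LexLE q (G ↑(nxt a)) := by
      by_cases he : q = G ↑(nxt a)
      · exact Or.inr he
      rcases lexLT_total he with h' | h'
      · exact Or.inl h'
      · obtain ⟨t₀, hag, hlt⟩ := h'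
        rw [Bool.lt_iff] at hlt
        by_cases ht₀ : t₀ ≤ d
        · rw [hqa t₀ ht₀] at hlt
          exact absurd hlt.2 (by rw [hlt.1]; simp)
        · rw [hqf t₀ ht₀] at hlt
          exact absurd hlt.2 (by simp)
    -- G (nxt a) ≤ G b
    have h3 : LexLE (G ↑(nxt a)) (G ↑b) := by
      rcases lt_or_eq_of_le (hnxt2 a b hab) with h' | h'
      · exact Or.inl (hmono ↑(nxt a) (nxt a).2 ↑b b.2 h')
      · exact Or.inr (congrArg G h')
    -- G b < q
    have h4 : LexLT (G ↑b) q := by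
      have hd_b : δ b = d := h1.symm
      refine ⟨d, fun t ht => ?_, ?_⟩
      · have := hδag b t (hd_b ▸ ht)
        rw [this, ← hqb t (le_of_lt ht)]
      · have hlt := lexLT_at_min (hmono ↑b b.2 ↑(nxt b) (nxt b).2 (hnxt1 b))
          (hδne b) (hδag b)
        rw [hd_b] at hlt
        rwa [← hqb d le_rfl] at hlt
    have : LexLT q q := lexLT_of_lexLE_of_lexLT h2 (lexLT_of_lexLE_of_lexLT h3 h4)
    exact this.ne rfl
  have hinj : Function.Injective Φ := by
    intro a b heq
    by_contra hne
    have hne' : (a : κ.ord.ToType) ≠ ↑b := fun h => hne (Subtype.ext h)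
    rcases hne'.lt_or_gt with h1 | h1
    · exact key a b h1 heq
    · exact key b a h1 heq.symm
  have hcard : #↑H ≤ #(Σ d : ν.ord.ToType, (↑(Set.Iic d) → Bool)) :=
    Cardinal.mk_le_of_injective hinj
  rw [hHcard, Cardinal.mk_sigma] at hcard
  have hsum : (Cardinal.sum fun d : ν.ord.ToType => #(↑(Set.Iic d) → Bool)) < κ := by
    refine Cardinal.sum_lt_of_isRegular hreg (by rw [mk_ordToType]; exact hνκ) (fun d => ?_)
    rw [mk_arrow_bool]
    exact hmin _ (mk_Iic_lt hν d)
  exact lt_irrefl _ (hcard.trans_lt hsum)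

theorem two_power_lt (hwc : IsWeaklyCompact κ) {μ : Cardinal.{u}} (hμ : μ < κ) :
    (2 : Cardinal.{u}) ^ μ < κ := by
  classical
  by_contra h1
  have h1' : κ ≤ 2 ^ μ := not_lt.mp h1
  obtain ⟨ν, ⟨hνκ, hν2⟩, hminS⟩ :=
    (wellFounded_lt).has_min {ν : Cardinal.{u} | ν < κ ∧ κ ≤ 2 ^ ν} ⟨μ, hμ, h1'⟩
  have hmin : ∀ μ' : Cardinal.{u}, μ' < ν → (2 : Cardinal.{u}) ^ μ' < κ := by
    intro μ' hμ'
    by_contra h2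
    exact hminS μ' ⟨hμ'.trans hνκ, not_lt.mp h2⟩ hμ'
  have hν : ℵ₀ ≤ ν := by
    by_contra h2
    have h3 : (2 : Cardinal.{u}) ^ ν < ℵ₀ :=
      Cardinal.power_lt_aleph0 (Cardinal.nat_lt_aleph0 2) (not_le.mp h2)
    exact absurd (hν2.trans_lt h3) (not_lt_of_gt hwc.1)
  have hpow : #(ν.ord.ToType → Bool) = (2 : Cardinal.{u}) ^ ν := by
    rw [mk_arrow_bool, mk_ordToType]
  have hle : #κ.ord.ToType ≤ #(ν.ord.ToType → Bool) := by
    rw [mk_ordToType, hpow]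
    exact hν2
  obtain ⟨F⟩ := Cardinal.le_def _ _ |>.mp hle
  obtain ⟨H, hHcard, hH⟩ := hwc.2 (fun a b => decide (LexLT (F a) (F b)))
  by_cases hcase : ∃ a ∈ H, ∃ b ∈ H, a < b ∧ LexLT (F a) (F b)
  · obtain ⟨a₀, ha₀, b₀, hb₀, hab₀, hlex₀⟩ := hcase
    refine no_monotone_chain hwc hν hνκ hmin (fun a => F a) H hHcard ?_
    intro a ha b hb hab
    have := hH a ha b hb a₀ ha₀ b₀ hb₀ hab hab₀
    rw [decide_eq_decide] at this
    exact this.mpr hlex₀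
  · push_neg at hcase
    refine no_monotone_chain hwc hν hνκ hmin (fun a t => !(F a t)) H hHcard ?_
    intro a ha b hb hab
    refine lexLT_not_not.mpr ?_
    have hne : F b ≠ F a := fun h => (ne_of_lt hab) (F.injective h.symm)
    rcases lexLT_total hne with h' | h'
    · exact h'
    · exact absurd h' (hcase a ha b hb hab)

end StrongLimit

section Branch
variable {κ : Cardinal.{u}}

/-- The agreement class of `β₀` at level `α` inside `H`, for the pattern function `pat2`. -/
def Kcl (H : Set κ.ord.ToType) (pat2 : κ.ord.ToType → κ.ord.ToType → Bool)
    (α β₀ : κ.ord.ToType) : Set κ.ord.ToType :=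
  {β | β ∈ H ∧ ∀ j, j < α → pat2 β j = pat2 β₀ j}

/-- The key branch lemma: given `κ`-many subsets of `κ`, there is a decreasing chain of
`κ`-sized sets deciding each of them. -/
theorem exists_branch_base (hwc : IsWeaklyCompact κ)
    (𝒜 : κ.ord.ToType → Set κ.ord.ToType) :
    ∃ B : κ.ord.ToType → Set κ.ord.ToType,
      (∀ α, #(B α) = κ) ∧
      (∀ α α', α ≤ α' → B α' ⊆ B α) ∧
      (∀ i, ∃ α, B α ⊆ 𝒜 i ∨ B α ⊆ (𝒜 i)ᶜ) := by
  classical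
  have hreg := isRegular_of_wc hwc
  haveI : NoMaxOrder κ.ord.ToType := Cardinal.noMaxOrder hwc.1.le
  set pat : κ.ord.ToType → κ.ord.ToType → Bool := fun β i => decide (β ∈ 𝒜 i) with hpat
  obtain ⟨H, hHcard, hH⟩ := hwc.2 (fun a b => decide (LexLT (pat a) (pat b)))
  -- extract a monotone pattern function
  obtain ⟨pat2, hmono, hrec⟩ : ∃ pat2 : κ.ord.ToType → κ.ord.ToType → Bool,
      (∀ a ∈ H, ∀ b ∈ H, a < b → LexLE (pat2 a) (pat2 b)) ∧
      (∀ a b i, pat2 a i = pat2 b i → pat a i = pat b i) := by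
    by_cases hcase : ∃ a ∈ H, ∃ b ∈ H, a < b ∧ LexLT (pat a) (pat b)
    · obtain ⟨a₀, ha₀, b₀, hb₀, hab₀, hlex₀⟩ := hcase
      refine ⟨pat, ?_, fun a b i h => h⟩
      intro a ha b hb hab
      left
      have := hH a ha b hb a₀ ha₀ b₀ hb₀ hab hab₀
      rw [decide_eq_decide] at this
      exact this.mpr hlex₀
    · push_neg at hcase
      refine ⟨fun a i => !(pat a i), ?_, fun a b i h => Bool.not_inj h⟩
      intro a ha b hb hab
      by_cases he : pat a = pat b
      · exact Or.inr (funext fun i => by show (!(pat a i)) = (!(pat b i)); rw [he])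
      rcases lexLT_total he with h' | h'
      · exact absurd h' (hcase a ha b hb hab)
      · exact Or.inl (lexLT_not_not.mpr h')
  -- for each level there is a κ-sized agreement class
  have hKex : ∀ α, ∃ β₀, β₀ ∈ H ∧ #(Kcl H pat2 α β₀) = κ := by
    intro α
    set φ : ↑H → (↑(Set.Iio α) → Bool) := fun β j => pat2 ↑β ↑j with hφ
    have hsig : #↑H = Cardinal.sum fun v : ↑(Set.Iio α) → Bool => #{β : ↑H // φ β = v} := by
      rw [← Cardinal.mk_sigma]
      exact Cardinal.mk_congr (Equiv.sigmaFiberEquiv φ).symm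
    have hbig : ∃ v : ↑(Set.Iio α) → Bool, ¬ #{β : ↑H // φ β = v} < κ := by
      by_contra hc
      push_neg at hc
      have hlt : (Cardinal.sum fun v : ↑(Set.Iio α) → Bool => #{β : ↑H // φ β = v}) < κ := by
        refine Cardinal.sum_lt_of_isRegular hreg ?_ hc
        rw [mk_arrow_bool]
        exact two_power_lt hwc (Cardinal.mk_Iio_ord_toType α)
      rw [← hsig, hHcard] at hlt
      exact lt_irrefl _ hlt
    obtain ⟨v, hv⟩ := hbig
    have hvκ : #{β : ↑H // φ β = v} = κ := by
      refine le_antisymm ?_ (not_lt.mp hv)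
      refine (Cardinal.mk_subtype_le _).trans ?_
      rw [hHcard]
    have hvne : Nonempty {β : ↑H // φ β = v} := by
      rw [← Cardinal.mk_ne_zero_iff, hvκ]
      exact (Cardinal.aleph0_pos.trans hwc.1).ne'
    obtain ⟨β₀'⟩ := hvne
    have hagree : ∀ x : {β : ↑H // φ β = v}, ∀ j, j < α → pat2 ↑↑x j = pat2 (↑↑β₀' : κ.ord.ToType) j := by
      intro x j hj
      have hx : φ ↑x = v := x.2
      have hβ₀ : φ ↑β₀' = v := β₀'.2
      have h1 := congrFun hx ⟨j, hj⟩
      have h2 := congrFun hβ₀ ⟨j, hj⟩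
      rw [← h2] at h1
      exact h1
    refine ⟨↑↑β₀', (↑β₀' : ↑H).2, ?_⟩
    refine le_antisymm ((Cardinal.mk_subtype_le _).trans (le_of_eq (mk_ordToType κ))) ?_
    refine le_trans (le_of_eq hvκ.symm) ?_
    refine Cardinal.mk_le_of_injective (f := fun x : {β : ↑H // φ β = v} =>
      (⟨↑↑x, (↑x : ↑H).2, hagree x⟩ : ↑(Kcl H pat2 α ↑↑β₀'))) ?_
    intro x y hxy
    have hval := congrArg (fun z : ↑(Kcl H pat2 α ↑↑β₀') => (z : κ.ord.ToType)) hxy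
    exact Subtype.ext (Subtype.ext hval)
  choose β₀f hβ₀H hβ₀K using hKex
  -- convexity of agreement classes
  have hconv : ∀ α γ, ∀ βx ∈ Kcl H pat2 α γ, ∀ βz ∈ Kcl H pat2 α γ, ∀ βy ∈ H,
      βx < βy → βy < βz → βy ∈ Kcl H pat2 α γ := by
    intro α γ βx hx βz hz βy hy hxy hyz
    have h1 : LexLE (pat2 βx) (pat2 βy) := hmono βx hx.1 βy hy hxy
    have h2 : LexLE (pat2 βy) (pat2 βz) := hmono βy hy βz hz.1 hyz
    have hagxz : ∀ j, j < α → pat2 βx j = pat2 βz j := by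
      intro j hj
      rw [hx.2 j hj, hz.2 j hj]
    have := lex_sandwich h1 h2 hagxz
    exact ⟨hy, fun j hj => by rw [← this j hj, hx.2 j hj]⟩
  -- uniqueness of the κ-sized class
  have huniq : ∀ α β₀ β₁, β₀ ∈ H → β₁ ∈ H → #(Kcl H pat2 α β₀) = κ →
      #(Kcl H pat2 α β₁) = κ → Kcl H pat2 α β₀ = Kcl H pat2 α β₁ := by
    intro α β₀ β₁ h₀ h₁ hk₀ hk₁
    by_cases hag : ∀ j, j < α → pat2 β₀ j = pat2 β₁ j
    · ext β
      constructor
      · rintro ⟨hβ, ha⟩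
        exact ⟨hβ, fun j hj => by rw [ha j hj, hag j hj]⟩
      · rintro ⟨hβ, ha⟩
        exact ⟨hβ, fun j hj => by rw [ha j hj, hag j hj]⟩
    · exfalso
      have hdisj : ∀ β, β ∈ Kcl H pat2 α β₀ → β ∉ Kcl H pat2 α β₁ := by
        rintro β ⟨hβ, ha⟩ ⟨hβ', ha'⟩
        exact hag fun j hj => by rw [← ha j hj, ha' j hj]
      have hne₀ : (Kcl H pat2 α β₀).Nonempty := by
        rw [← Set.nonempty_coe_sort, ← Cardinal.mk_ne_zero_iff, hk₀]
        exact (Cardinal.aleph0_pos.trans hwc.1).ne'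
      have hne₁ : (Kcl H pat2 α β₁).Nonempty := by
        rw [← Set.nonempty_coe_sort, ← Cardinal.mk_ne_zero_iff, hk₁]
        exact (Cardinal.aleph0_pos.trans hwc.1).ne'
      obtain ⟨x₀, hx₀⟩ := hne₀
      obtain ⟨y₀, hy₀⟩ := hne₁
      have haux : ∀ γ γ' x y, x ∈ Kcl H pat2 α γ → y ∈ Kcl H pat2 α γ' →
          (∀ β, β ∈ Kcl H pat2 α γ → β ∉ Kcl H pat2 α γ') → x < y →
          #(Kcl H pat2 α γ) = κ → False := by
        intro γ γ' x y hx hy hd hxy hkγ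
        have hsub : Kcl H pat2 α γ ⊆ Set.Iio y := by
          intro z hz
          by_contra hzy
          have hzy' : ¬ z < y := hzy
          rcases lt_or_eq_of_le (not_lt.mp hzy') with h' | h'
          · exact hd y (hconv α γ x hx z hz y hy.1 hxy h') hy
          · rw [h'] at hy
            exact hd z hz hy
        have := (Cardinal.mk_le_mk_of_subset hsub).trans_lt (Cardinal.mk_Iio_ord_toType y)
        rw [hkγ] at this
        exact lt_irrefl _ this
      have hxyne : x₀ ≠ y₀ := fun h => hdisj x₀ hx₀ (h ▸ hy₀)
      rcases hxyne.lt_or_gt with h' | h'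
      · exact haux β₀ β₁ x₀ y₀ hx₀ hy₀ hdisj h' hk₀
      · exact haux β₁ β₀ y₀ x₀ hy₀ hx₀ (fun β hβ hβ' => hdisj β hβ' hβ) h' hk₁
  refine ⟨fun α => Kcl H pat2 α (β₀f α), fun α => hβ₀K α, ?_, ?_⟩
  · -- antitone
    intro α α' hαα' β hβ
    have hsub : Kcl H pat2 α' (β₀f α') ⊆ Kcl H pat2 α (β₀f α') := by
      rintro z ⟨hz, ha⟩
      exact ⟨hz, fun j hj => ha j (hj.trans_le hαα')⟩
    have hk : #(Kcl H pat2 α (β₀f α')) = κ := by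
      refine le_antisymm ((Cardinal.mk_subtype_le _).trans (le_of_eq (mk_ordToType κ))) ?_
      exact le_trans (le_of_eq (hβ₀K α').symm) (Cardinal.mk_le_mk_of_subset hsub)
    have heq := huniq α (β₀f α) (β₀f α') (hβ₀H α) (hβ₀H α') (hβ₀K α) hk
    show β ∈ Kcl H pat2 α (β₀f α)
    rw [heq]
    exact hsub hβ
  · -- deciding
    intro i
    obtain ⟨α, hα⟩ := exists_gt i
    refine ⟨α, ?_⟩
    by_cases hmem : β₀f α ∈ 𝒜 i
    · left
      rintro β ⟨hβ, ha⟩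
      have := hrec β (β₀f α) i (ha i hα)
      rw [hpat] at this
      simp only [decide_eq_decide] at this
      exact this.mpr hmem
    · right
      rintro β ⟨hβ, ha⟩
      have := hrec β (β₀f α) i (ha i hα)
      rw [hpat] at this
      simp only [decide_eq_decide] at this
      exact fun hmem' => hmem (this.mp hmem')

end Branch

/-! ### The function family -/

/-- The closure of the identity and the constants under postcomposition with `ℓ q`. -/
inductive Fam {Q : Type u} {O : Type u} (ℓ : Q → O → O) : (O → O) → Prop
  | base_id : Fam ℓ (fun β => β)
  | base_const (ξ : O) : Fam ℓ (fun _ => ξ)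
  | comp (q : Q) {f : O → O} (hf : Fam ℓ f) : Fam ℓ (fun β => ℓ q (f β))

section Fam
variable {Q : Type u} {O : Type u} (ℓ : Q → O → O)

/-- Evaluation of codes for members of `Fam`. -/
def famEval : List Q → (O ⊕ PUnit.{u + 1}) → (O → O)
  | [], Sum.inl ξ => fun _ => ξ
  | [], Sum.inr _ => fun β => β
  | q :: l, b => fun β => ℓ q (famEval l b β)

theorem famEval_surj {f : O → O} (hf : Fam ℓ f) :
    ∃ c : List Q × (O ⊕ PUnit.{u + 1}), famEval ℓ c.1 c.2 = f := by
  induction hf with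
  | base_id => exact ⟨([], Sum.inr ⟨⟩), rfl⟩
  | base_const ξ => exact ⟨([], Sum.inl ξ), rfl⟩
  | comp q hf ih =>
    obtain ⟨⟨l, b⟩, hc⟩ := ih
    refine ⟨(q :: l, b), ?_⟩
    funext β
    show ℓ q (famEval ℓ l b β) = _
    rw [hc]

theorem mk_fam_le {κ : Cardinal.{u}} (hQ : #Q = κ) (hO : #O = κ) (hκ : ℵ₀ ≤ κ) :
    #{f : O → O // Fam ℓ f} ≤ κ := by
  classical
  by_cases hne : Nonempty {f : O → O // Fam ℓ f}
  · obtain ⟨f₀⟩ := hne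
    have hsurj : Function.Surjective (fun c : List Q × (O ⊕ PUnit.{u + 1}) =>
        if h : Fam ℓ (famEval ℓ c.1 c.2) then (⟨famEval ℓ c.1 c.2, h⟩ : {f : O → O // Fam ℓ f})
        else f₀) := by
      rintro ⟨f, hf⟩
      obtain ⟨c, hc⟩ := famEval_surj ℓ hf
      refine ⟨c, ?_⟩
      show dite _ _ _ = _
      rw [dif_pos (hc ▸ hf : Fam ℓ (famEval ℓ c.1 c.2))]
      exact Subtype.ext hc
    refine (Cardinal.mk_le_of_surjective hsurj).trans ?_
    have h1 : #(List Q × (O ⊕ PUnit.{u + 1})) = #(List Q) * #(O ⊕ PUnit.{u + 1}) := by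
      rw [Cardinal.mk_prod, Cardinal.lift_id, Cardinal.lift_id]
    haveI : Infinite Q := Cardinal.infinite_iff.mpr (by rw [hQ]; exact hκ)
    have h2 : #(List Q) = κ := by rw [Cardinal.mk_list_eq_mk, hQ]
    have h3 : #(O ⊕ PUnit.{u + 1}) ≤ κ := by
      rw [Cardinal.mk_sum, Cardinal.lift_id, Cardinal.lift_id, hO, Cardinal.mk_punit]
      calc κ + 1 ≤ κ + κ := add_le_add_right (Cardinal.one_le_aleph0.trans hκ) κ
        _ = κ := Cardinal.add_eq_self hκ
    rw [h1, h2]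
    calc κ * #(O ⊕ PUnit.{u + 1}) ≤ κ * κ := mul_le_mul_right h3 κ
      _ = κ := Cardinal.mul_eq_self hκ
  · rw [not_nonempty_iff] at hne
    rw [Cardinal.mk_eq_zero_iff.mpr hne]
    exact (Cardinal.aleph0_pos.trans_le hκ).le

end Fam

/-! ### The witness-closed set `Q` -/

section Qset
variable {P : Type u} [PartialOrder P] {κ : Cardinal.{u}}

theorem exists_Qset (hwc : IsWeaklyCompact κ) (base : Set P) (hbase : #base < κ)
    (hP : κ ≤ #P) :
    ∃ Q : Set P, base ⊆ Q ∧ #Q = κ ∧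
      ∀ X : Set P, X ⊆ Q → #X < κ → (∃ w : P, ∀ x ∈ X, ¬ Compat w x) →
        ∃ w ∈ Q, ∀ x ∈ X, ¬ Compat w x := by
  classical
  have hreg := isRegular_of_wc hwc
  haveI hnO : Nonempty κ.ord.ToType := by
    rw [← Cardinal.mk_ne_zero_iff, mk_ordToType]
    exact (Cardinal.aleph0_pos.trans hwc.1).ne'
  haveI : NoMaxOrder κ.ord.ToType := Cardinal.noMaxOrder hwc.1.le
  obtain ⟨E⟩ : Nonempty (κ.ord.ToType ↪ P) := by
    rw [← Cardinal.le_def, mk_ordToType]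
    exact hP
  set wit : Set P → P := fun X =>
    if h : ∃ w : P, ∀ x ∈ X, ¬ Compat w x then h.choose else E (Classical.arbitrary _)
    with hwit
  have hwit_spec : ∀ X : Set P, (∃ w : P, ∀ x ∈ X, ¬ Compat w x) →
      ∀ x ∈ X, ¬ Compat (wit X) x := by
    intro X h
    rw [hwit]
    simp only [dif_pos h]
    exact h.choose_spec
  set wits : Set P → Set P := fun S => wit '' (Set.powerset S) with hwits
  have hwits_card : ∀ S : Set P, #S < κ → #(wits S) < κ := by
    intro S hS
    refine lt_of_le_of_lt Cardinal.mk_image_le ?_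
    rw [Cardinal.mk_powerset]
    exact two_power_lt hwc hS
  -- the cumulative hierarchy
  set Qf : κ.ord.ToType → Set P := WellFounded.fix wellFounded_lt
    (fun α IH => (base ∪ ⋃ ξ : ↑(Set.Iio α), {E ↑ξ}) ∪
      ⋃ β : ↑(Set.Iio α), wits (IH ↑β β.2)) with hQf
  have hQf_eq : ∀ α, Qf α = (base ∪ ⋃ ξ : ↑(Set.Iio α), {E ↑ξ}) ∪
      ⋃ β : ↑(Set.Iio α), wits (Qf ↑β) := by
    intro α
    rw [hQf]
    rw [WellFounded.fix_eq]
  have hQf_mono : ∀ α α', α ≤ α' → Qf α ⊆ Qf α' := by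
    intro α α' hαα'
    rw [hQf_eq α, hQf_eq α']
    refine Set.union_subset_union (Set.union_subset_union subset_rfl ?_) ?_
    · refine Set.iUnion_subset fun ξ => ?_
      exact Set.subset_iUnion_of_subset ⟨↑ξ, ξ.2.trans_le hαα'⟩ subset_rfl
    · refine Set.iUnion_subset fun β => ?_
      exact Set.subset_iUnion_of_subset ⟨↑β, β.2.trans_le hαα'⟩ subset_rfl
  have hQf_card : ∀ α, #(Qf α) < κ := by
    have hind : ∀ α, (∀ β, β < α → #(Qf β) < κ) → #(Qf α) < κ := by
      intro α IH
      rw [hQf_eq α]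
      refine lt_of_le_of_lt (Cardinal.mk_union_le _ _) ?_
      refine Cardinal.add_lt_of_lt hwc.1.le
        (lt_of_le_of_lt (Cardinal.mk_union_le _ _) (Cardinal.add_lt_of_lt hwc.1.le hbase ?_)) ?_
      · refine lt_of_le_of_lt (Cardinal.mk_iUnion_le _) ?_
        refine Cardinal.mul_lt_of_lt hwc.1.le (Cardinal.mk_Iio_ord_toType α) ?_
        refine Cardinal.iSup_lt_of_isRegular hreg (Cardinal.mk_Iio_ord_toType α) (fun ξ => ?_)
        rw [Cardinal.mk_singleton]
        exact Cardinal.one_lt_aleph0.trans hwc.1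
      · refine lt_of_le_of_lt (Cardinal.mk_iUnion_le _) ?_
        refine Cardinal.mul_lt_of_lt hwc.1.le (Cardinal.mk_Iio_ord_toType α) ?_
        refine Cardinal.iSup_lt_of_isRegular hreg (Cardinal.mk_Iio_ord_toType α) (fun β => ?_)
        exact hwits_card _ (IH ↑β β.2)
    exact fun α => (wellFounded_lt).induction α hind
  refine ⟨⋃ α : κ.ord.ToType, Qf α, ?_, ?_, ?_⟩
  · -- base ⊆ Q
    obtain ⟨α₀⟩ := hnO
    refine Set.subset_iUnion_of_subset α₀ ?_
    rw [hQf_eq α₀]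
    exact fun p hp => Or.inl (Or.inl hp)
  · -- cardinality
    refine le_antisymm ?_ ?_
    · refine le_trans (Cardinal.mk_iUnion_le _) ?_
      rw [mk_ordToType]
      refine le_trans (mul_le_mul_right (ciSup_le' fun α => (hQf_card α).le) κ) ?_
      rw [Cardinal.mul_eq_self hwc.1.le]
    · have hrange : Set.range E ⊆ ⋃ α : κ.ord.ToType, Qf α := by
        rintro p ⟨ξ, rfl⟩
        obtain ⟨α, hα⟩ := exists_gt ξ
        refine Set.mem_iUnion.mpr ⟨α, ?_⟩
        rw [hQf_eq α]
        exact Or.inl (Or.inr (Set.mem_iUnion.mpr ⟨⟨ξ, hα⟩, rfl⟩))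
      refine le_trans ?_ (Cardinal.mk_le_mk_of_subset hrange)
      rw [show #(Set.range E) = #κ.ord.ToType from Cardinal.mk_range_eq E E.injective,
        mk_ordToType]
  · -- witness closure
    intro X hXQ hXcard hexw
    have hstage : ∀ x : ↑X, ∃ α, ↑x ∈ Qf α := by
      intro x
      exact Set.mem_iUnion.mp (hXQ x.2)
    choose g hg using hstage
    obtain ⟨xs, hxs⟩ := bddAbove_of_small hwc g hXcard
    obtain ⟨α₀, hα₀⟩ := exists_gt xs
    have hXsub : X ⊆ Qf α₀ := by
      intro x hx
      exact hQf_mono (g ⟨x, hx⟩) α₀ ((hxs ⟨x, hx⟩).trans hα₀.le) (hg ⟨x, hx⟩)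
    obtain ⟨α₁, hα₁⟩ := exists_gt α₀
    refine ⟨wit X, ?_, hwit_spec X hexw⟩
    refine Set.mem_iUnion.mpr ⟨α₁, ?_⟩
    rw [hQf_eq α₁]
    refine Or.inr (Set.mem_iUnion.mpr ⟨⟨α₀, hα₁⟩, ?_⟩)
    exact Set.mem_image_of_mem wit hXsub

end Qset

end WCAux


open WCAux in
/-- Let `κ` be weakly compact and `P` a `κ`-cc poset of arbitrary size.  Given fewer than
`κ` many antichains of `P`, each of size `< κ`, there is `A ⊆ P` of size `< κ` containing
all of them such that `A` is a complete suborder of `P`: every maximal antichain of the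
suborder `A` remains maximal in `P`, and `A` reflects the dense-set structure of `P`
(every subset of `A` dense in `A` is predense in `P`). -/
theorem small_complete_suborder_exists {P : Type u} [PartialOrder P]
    (κ : Cardinal.{u}) (hwc : IsWeaklyCompact κ)
    (hcc : ∀ A : Set P, IsAntichainIn A → Cardinal.mk A < κ)
    (ι : Type u) (hι : Cardinal.mk ι < κ)
    (B : ι → Set P) (hB : ∀ i, IsAntichainIn (B i) ∧ Cardinal.mk (B i) < κ) :
    ∃ A : Set P, Cardinal.mk A < κ ∧ (∀ i, B i ⊆ A) ∧
      (∀ X ⊆ A, IsAntichainIn X → (∀ p ∈ A, ∃ q ∈ X, Compat p q) →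
        ∀ p : P, ∃ q ∈ X, Compat p q) ∧
      (∀ D ⊆ A, (∀ p ∈ A, ∃ q ∈ D, q ≤ p) → ∀ p : P, ∃ q ∈ D, Compat p q) := by
  classical
  -- Condition (2) follows from condition (1), by Zorn's lemma.
  have hzorn : ∀ A : Set P,
      (∀ X ⊆ A, IsAntichainIn X → (∀ p ∈ A, ∃ q ∈ X, Compat p q) →
        ∀ p : P, ∃ q ∈ X, Compat p q) →
      (∀ D ⊆ A, (∀ p ∈ A, ∃ q ∈ D, q ≤ p) → ∀ p : P, ∃ q ∈ D, Compat p q) := by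
    intro A hcond1 D hDA hdense p
    have hchains : ∀ c ⊆ {Y : Set P | Y ⊆ D ∧ IsAntichainIn Y}, IsChain (· ⊆ ·) c →
        ∃ ub ∈ {Y : Set P | Y ⊆ D ∧ IsAntichainIn Y}, ∀ s ∈ c, s ⊆ ub := by
      intro c hcS hchain
      refine ⟨⋃₀ c, ⟨?_, ?_⟩, fun s hs => Set.subset_sUnion_of_mem hs⟩
      · exact Set.sUnion_subset fun Y hY => (hcS hY).1
      · intro x hx y hy hxy
        obtain ⟨Y₁, hY₁, hxY₁⟩ := hx
        obtain ⟨Y₂, hY₂, hyY₂⟩ := hy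
        rcases eq_or_ne Y₁ Y₂ with rfl | hne
        · exact (hcS hY₁).2 x hxY₁ y hyY₂ hxy
        · rcases hchain hY₁ hY₂ hne with h | h
          · exact (hcS hY₂).2 x (h hxY₁) y hyY₂ hxy
          · exact (hcS hY₁).2 x hxY₁ y (h hyY₂) hxy
    obtain ⟨M, hM⟩ := zorn_subset {Y : Set P | Y ⊆ D ∧ IsAntichainIn Y} hchains
    · obtain ⟨hMD, hManti⟩ := hM.1
      have hpre : ∀ p' ∈ A, ∃ x ∈ M, Compat p' x := by
        intro p' hp'
        obtain ⟨d, hdD, hdp⟩ := hdense p' hp'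
        have hMd : ∃ x ∈ M, Compat d x := by
          by_contra hno
          push_neg at hno
          have hdM : d ∉ M := fun hdM => hno d hdM ⟨d, le_rfl, le_rfl⟩
          have hins : insert d M ∈ {Y : Set P | Y ⊆ D ∧ IsAntichainIn Y} := by
            constructor
            · exact Set.insert_subset hdD hMD
            · intro x hx y hy hxy
              rcases hx with rfl | hx
              · rcases hy with rfl | hy
                · exact absurd rfl hxy
                · exact hno y hy
              · rcases hy with rfl | hy
                · rintro ⟨r, hr1, hr2⟩
                  exact hno x hx ⟨r, hr2, hr1⟩
                · exact hManti x hx y hy hxy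
          have hsub := hM.2 hins (Set.subset_insert d M)
          exact hdM (hsub (Set.mem_insert d M))
        obtain ⟨x, hxM, r, hr1, hr2⟩ := hMd
        exact ⟨x, hxM, r, hr1.trans hdp, hr2⟩
      obtain ⟨x, hxM, hx⟩ := hcond1 M (hMD.trans hDA) hManti hpre p
      exact ⟨x, hMD hxM, hx⟩
  by_cases hP : κ ≤ #P
  swap
  · refine ⟨Set.univ, ?_, fun i => Set.subset_univ _, ?_, ?_⟩
    · rw [Cardinal.mk_univ]
      exact not_le.mp hP
    · intro X _ _ hpre p
      exact hpre p (Set.mem_univ p)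
    · refine hzorn Set.univ ?_
      intro X _ _ hpre p
      exact hpre p (Set.mem_univ p)
  have hreg := isRegular_of_wc hwc
  haveI hnO : Nonempty κ.ord.ToType := by
    rw [← Cardinal.mk_ne_zero_iff, mk_ordToType]
    exact (Cardinal.aleph0_pos.trans hwc.1).ne'
  haveI : NoMaxOrder κ.ord.ToType := Cardinal.noMaxOrder hwc.1.le
  have hbase : #(⋃ i, B i) < κ :=
    (Cardinal.card_iUnion_lt_iff_forall_of_isRegular hreg hι).mpr fun i => (hB i).2
  obtain ⟨Q, hbaseQ, hQcard, hQclose⟩ := exists_Qset hwc (⋃ i, B i) hbase hP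
  obtain ⟨e⟩ : Nonempty (κ.ord.ToType ≃ ↑Q) := by
    rw [← Cardinal.eq, mk_ordToType, hQcard]
  set DD : κ.ord.ToType → Set P := fun α => {p | ∃ hp : p ∈ Q, e.symm ⟨p, hp⟩ < α}
    with hDDdef
  have hDD_sub : ∀ α, DD α ⊆ Q := fun α p hp => hp.choose
  have hDD_card : ∀ α, #(DD α) < κ := by
    intro α
    have hinj : Function.Injective
        (fun p : ↑(DD α) => (⟨e.symm ⟨↑p, p.2.choose⟩, p.2.choose_spec⟩ : ↑(Set.Iio α))) := by
      intro p p' hpp'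
      have h1 : e.symm ⟨↑p, p.2.choose⟩ = e.symm ⟨↑p', p'.2.choose⟩ :=
        congrArg Subtype.val hpp'
      have h2 : (⟨↑p, p.2.choose⟩ : ↑Q) = ⟨↑p', p'.2.choose⟩ := e.symm.injective h1
      have h3 := congrArg Subtype.val h2
      exact Subtype.ext h3
    exact (Cardinal.mk_le_of_injective hinj).trans_lt (Cardinal.mk_Iio_ord_toType α)
  obtain ⟨α₁, hα₁⟩ : ∃ α₁, ∀ α, α₁ ≤ α → (⋃ i, B i) ⊆ DD α := by
    obtain ⟨xs, hxs⟩ := bddAbove_of_small hwc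
      (fun x : ↑(⋃ i, B i) => e.symm ⟨↑x, hbaseQ x.2⟩) hbase
    obtain ⟨α₁, hα₁⟩ := exists_gt xs
    refine ⟨α₁, fun α hα p hp => ⟨hbaseQ hp, ?_⟩⟩
    exact lt_of_le_of_lt (hxs ⟨p, hp⟩) (hα₁.trans_le hα)
  have hclaim : ∃ α, α₁ ≤ α ∧ ∀ X : Set P, X ⊆ DD α → IsAntichainIn X →
      (∀ p ∈ DD α, ∃ x ∈ X, Compat p x) → ∀ p ∈ Q, ∃ x ∈ X, Compat p x := by
    by_contra hbadall
    push_neg at hbadall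
    have hbad : ∀ α, ∃ XX : Set P, ∃ qq : P, α₁ ≤ α →
        XX ⊆ DD α ∧ IsAntichainIn XX ∧ (∀ p ∈ DD α, ∃ x ∈ XX, Compat p x) ∧
        qq ∈ Q ∧ ∀ x ∈ XX, ¬ Compat qq x := by
      intro α
      by_cases hα : α₁ ≤ α
      · have h := hbadall α hα
        obtain ⟨X, h1, h2, h3, q, hq, hq2⟩ := h
        exact ⟨X, q, fun _ => ⟨h1, h2, h3, hq, hq2⟩⟩
      · exact ⟨∅, (e (Classical.arbitrary _)).1, fun h => absurd h hα⟩
    choose Xa qa hbad' using hbad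
    set ℓ : ↑Q → κ.ord.ToType → κ.ord.ToType := fun q α =>
      if h : ∃ ξ, ξ < α ∧ (e ξ).1 ∈ Xa α ∧ Compat q.1 (e ξ).1 then h.choose
      else Classical.arbitrary _ with hℓdef
    have hℓ_spec : ∀ (q : ↑Q) (α : κ.ord.ToType),
        (∃ ξ, ξ < α ∧ (e ξ).1 ∈ Xa α ∧ Compat q.1 (e ξ).1) →
        ℓ q α < α ∧ (e (ℓ q α)).1 ∈ Xa α ∧ Compat q.1 (e (ℓ q α)).1 := by
      intro q α h
      rw [hℓdef]
      simp only [dif_pos h]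
      exact h.choose_spec
    set FF := {f : κ.ord.ToType → κ.ord.ToType // Fam ℓ f} with hFFdef
    have hFFcard : #FF ≤ κ := mk_fam_le ℓ hQcard (mk_ordToType κ) hwc.1.le
    set sets : (FF × FF) ⊕ ((FF × FF) ⊕ ((FF × κ.ord.ToType) ⊕ κ.ord.ToType)) →
        Set κ.ord.ToType := fun i =>
      match i with
      | Sum.inl (f, g) => {β | f.1 β < g.1 β}
      | Sum.inr (Sum.inl (f, g)) => {β | f.1 β = g.1 β}
      | Sum.inr (Sum.inr (Sum.inl (f, ξ))) => {β | (e ξ).1 ∈ Xa (f.1 β)}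
      | Sum.inr (Sum.inr (Sum.inr ξ)) => {β | ξ < β}
      with hsetsdef
    have hadd : ∀ a b : Cardinal.{u}, a ≤ κ → b ≤ κ → a + b ≤ κ := fun a b ha hb =>
      (add_le_add ha hb).trans (le_of_eq (Cardinal.add_eq_self hwc.1.le))
    have hprodFF' : #FF * #FF ≤ κ :=
      (mul_le_mul' hFFcard hFFcard).trans (le_of_eq (Cardinal.mul_eq_self hwc.1.le))
    have hIcard : #((FF × FF) ⊕ ((FF × FF) ⊕ ((FF × κ.ord.ToType) ⊕ κ.ord.ToType))) ≤ κ := by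
      simp only [Cardinal.mk_sum, Cardinal.mk_prod, Cardinal.lift_id]
      refine hadd _ _ hprodFF' ?_
      refine hadd _ _ hprodFF' ?_
      refine hadd _ _ ?_ (le_of_eq (mk_ordToType κ))
      refine (mul_le_mul' hFFcard (le_of_eq (mk_ordToType κ))).trans
        (le_of_eq (Cardinal.mul_eq_self hwc.1.le))
    obtain ⟨emb⟩ : Nonempty (((FF × FF) ⊕ ((FF × FF) ⊕ ((FF × κ.ord.ToType) ⊕ κ.ord.ToType)))
        ↪ κ.ord.ToType) := by
      rw [← Cardinal.le_def, mk_ordToType]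
      exact hIcard
    haveI hInhI : Nonempty ((FF × FF) ⊕ ((FF × FF) ⊕ ((FF × κ.ord.ToType) ⊕ κ.ord.ToType))) :=
      ⟨Sum.inr (Sum.inr (Sum.inr (Classical.arbitrary _)))⟩
    set σ := Function.invFun emb with hσdef
    have hσ : ∀ i, σ (emb i) = i := Function.leftInverse_invFun emb.injective
    obtain ⟨BB, hBBcard, hBBmono, hBBdec⟩ := exists_branch_base hwc (fun β => sets (σ β))
    set F₀ : Set κ.ord.ToType → Prop := fun S => ∃ α, BB α ⊆ S with hF₀def
    have hF₀mono : ∀ {S T : Set κ.ord.ToType}, S ⊆ T → F₀ S → F₀ T := by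
      rintro S T hST ⟨α, hα⟩
      exact ⟨α, hα.trans hST⟩
    have hF₀ne : ∀ {S : Set κ.ord.ToType}, F₀ S → S.Nonempty := by
      rintro S ⟨α, hα⟩
      have hne : (BB α).Nonempty := by
        rw [← Set.nonempty_coe_sort, ← Cardinal.mk_ne_zero_iff, hBBcard α]
        exact (Cardinal.aleph0_pos.trans hwc.1).ne'
      exact hne.mono hα
    have hF₀inter2 : ∀ {S T : Set κ.ord.ToType}, F₀ S → F₀ T → F₀ (S ∩ T) := by
      rintro S T ⟨α, hα⟩ ⟨α', hα'⟩
      rcases le_total α α' with h | h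
      · exact ⟨α', Set.subset_inter ((hBBmono α α' h).trans hα) hα'⟩
      · exact ⟨α, Set.subset_inter hα ((hBBmono α' α h).trans hα')⟩
    have hF₀meas : ∀ i, F₀ (sets i) ∨ F₀ (sets i)ᶜ := by
      intro i
      obtain ⟨α, hα⟩ := hBBdec (emb i)
      rw [hσ i] at hα
      rcases hα with h | h
      · exact Or.inl ⟨α, h⟩
      · exact Or.inr ⟨α, h⟩
    have hF₀small : ∀ {ι' : Type u} (S : ι' → Set κ.ord.ToType), #ι' < κ →
        (∀ j, F₀ (S j)) → F₀ (⋂ j, S j) := by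
      intro ι' S hι' hS
      choose αf hαf using hS
      obtain ⟨xs, hxs⟩ := bddAbove_of_small hwc αf hι'
      refine ⟨xs, Set.subset_iInter fun j => ?_⟩
      exact (hBBmono (αf j) xs (hxs j)).trans (hαf j)
    have hF₀tail : ∀ ξ, F₀ {β | ξ < β} := by
      intro ξ
      rcases hF₀meas (Sum.inr (Sum.inr (Sum.inr ξ))) with h | h
      · exact h
      · exfalso
        obtain ⟨α, hα⟩ := h
        have hsub : BB α ⊆ Set.Iic ξ := by
          intro β hβ
          have hc : ¬ ξ < β := hα hβ
          exact not_lt.mp hc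
        have hlt := (Cardinal.mk_le_mk_of_subset hsub).trans_lt (mk_Iic_lt hwc.1.le ξ)
        rw [hBBcard α] at hlt
        exact lt_irrefl _ hlt
    have htric : ∀ f g : FF, F₀ {β | f.1 β < g.1 β} ∨ F₀ {β | f.1 β = g.1 β} ∨
        F₀ {β | g.1 β < f.1 β} := by
      intro f g
      rcases hF₀meas (Sum.inl (f, g)) with h1 | h1
      · exact Or.inl h1
      rcases hF₀meas (Sum.inr (Sum.inl (f, g))) with h2 | h2
      · exact Or.inr (Or.inl h2)
      rcases hF₀meas (Sum.inl (g, f)) with h3 | h3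
      · exact Or.inr (Or.inr h3)
      exfalso
      obtain ⟨β, hβ⟩ := hF₀ne (hF₀inter2 (hF₀inter2 h1 h2) h3)
      obtain ⟨⟨hβ1, hβ2⟩, hβ3⟩ := hβ
      rcases lt_trichotomy (f.1 β) (g.1 β) with h | h | h
      · exact hβ1 h
      · exact hβ2 h
      · exact hβ3 h
    have hconst : ∀ (g : FF) (ξ : κ.ord.ToType), F₀ {β | g.1 β < ξ} →
        ∃ η, F₀ {β | g.1 β = η} := by
      intro g ξ hg
      by_contra hno
      push_neg at hno
      have hco : ∀ η : ↑(Set.Iio ξ), F₀ {β | g.1 β = (↑η : κ.ord.ToType)}ᶜ := by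
        intro η
        rcases hF₀meas (Sum.inr (Sum.inl (g, ⟨fun _ => ↑η, Fam.base_const _⟩))) with h | h
        · exact absurd h (hno ↑η)
        · exact h
      obtain ⟨β, hβ1, hβ2⟩ := hF₀ne (hF₀inter2
        (hF₀small _ (Cardinal.mk_Iio_ord_toType ξ) hco) hg)
      exact (Set.mem_iInter.mp hβ1 ⟨g.1 β, hβ2⟩) rfl
    obtain ⟨fstar, hfZ, hfmin⟩ : ∃ f : FF, (∀ ξ, F₀ {β | ξ < f.1 β}) ∧
        ∀ g : FF, (∀ ξ, F₀ {β | ξ < g.1 β}) → ¬ F₀ {β | g.1 β < f.1 β} := by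
      by_contra hnomin
      push_neg at hnomin
      have hZid : ∀ ξ, F₀ {β | ξ < (⟨fun β => β, Fam.base_id⟩ : FF).1 β} :=
        fun ξ => hF₀tail ξ
      have hstep : ∀ f : {f : FF // ∀ ξ, F₀ {β | ξ < f.1 β}},
          ∃ g : {f : FF // ∀ ξ, F₀ {β | ξ < f.1 β}}, F₀ {β | g.1.1 β < f.1.1 β} := by
        intro f
        obtain ⟨g, hg1, hg2⟩ := hnomin ↑f f.2
        exact ⟨⟨g, hg1⟩, hg2⟩
      choose nxt hnxt using hstep
      set seq : ℕ → {f : FF // ∀ ξ, F₀ {β | ξ < f.1 β}} :=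
        fun n => nxt^[n] ⟨⟨fun β => β, Fam.base_id⟩, hZid⟩ with hseqdef
      have hseq : ∀ n, F₀ {β | (seq (n + 1)).1.1 β < (seq n).1.1 β} := by
        intro n
        have hs : seq (n + 1) = nxt (seq n) := Function.iterate_succ_apply' nxt n _
        rw [hs]
        exact hnxt (seq n)
      have hmkn : #(ULift.{u} ℕ) < κ := by
        have hn : #(ULift.{u} ℕ) = ℵ₀ := by simp
        rw [hn]
        exact hwc.1
      obtain ⟨β, hβ⟩ := hF₀ne (hF₀small (fun n : ULift.{u} ℕ =>
        {β | (seq (n.down + 1)).1.1 β < (seq n.down).1.1 β}) hmkn (fun n => hseq n.down))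
      have hβ' : ∀ n : ℕ, (seq (n + 1)).1.1 β < (seq n).1.1 β :=
        fun n => Set.mem_iInter.mp hβ ⟨n⟩
      obtain ⟨x, hxmem, hminx⟩ := (wellFounded_lt).has_min
        (Set.range fun n => (seq n).1.1 β) ⟨_, 0, rfl⟩
      obtain ⟨n₀, rfl⟩ := hxmem
      exact hminx _ ⟨n₀ + 1, rfl⟩ (hβ' n₀)
    have hkey : ∀ g : FF, F₀ {β | g.1 β < fstar.1 β} → ∃ ξ, F₀ {β | g.1 β = ξ} := by
      intro g hg
      by_cases hgZ : ∀ ξ, F₀ {β | ξ < g.1 β}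
      · exact absurd hg (hfmin g hgZ)
      push_neg at hgZ
      obtain ⟨ξ, hξ⟩ := hgZ
      rcases htric g ⟨fun _ => ξ, Fam.base_const _⟩ with h | h | h
      · exact hconst g ξ h
      · exact ⟨ξ, h⟩
      · exact absurd h hξ
    have hdefset : ∀ q : ↑Q, ∀ β, max α₁ (e.symm q) < fstar.1 β →
        ∃ ξ, ξ < fstar.1 β ∧ (e ξ).1 ∈ Xa (fstar.1 β) ∧ Compat q.1 (e ξ).1 := by
      intro q β hβ
      have hα₁α : α₁ ≤ fstar.1 β := ((le_max_left _ _).trans_lt hβ).le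
      obtain ⟨hXsub, hXanti', hXpre, hqaQ, hqainc⟩ := hbad' (fstar.1 β) hα₁α
      have hqD : (↑q : P) ∈ DD (fstar.1 β) := by
        refine ⟨q.2, ?_⟩
        have h2 : (⟨↑q, q.2⟩ : ↑Q) = q := Subtype.ext rfl
        rw [h2]
        exact (le_max_right _ _).trans_lt hβ
      obtain ⟨x, hxX, hcx⟩ := hXpre q.1 hqD
      obtain ⟨hxQ, hxlt⟩ := hXsub hxX
      have hex : (e (e.symm ⟨x, hxQ⟩)).1 = x := by
        rw [Equiv.apply_symm_apply]
      refine ⟨e.symm ⟨x, hxQ⟩, hxlt, ?_, ?_⟩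
      · rw [hex]
        exact hxX
      · rw [hex]
        exact hcx
    have hpredense : ∀ q : ↑Q,
        ∃ x, (∃ hx : x ∈ Q, F₀ {β | x ∈ Xa (fstar.1 β)}) ∧ Compat q.1 x := by
      intro q
      have hglt : F₀ {β | (⟨fun β => ℓ q (fstar.1 β), Fam.comp q fstar.2⟩ : FF).1 β
          < fstar.1 β} := by
        refine hF₀mono ?_ (hfZ (max α₁ (e.symm q)))
        intro β hβ
        exact (hℓ_spec q (fstar.1 β) (hdefset q β hβ)).1
      obtain ⟨ξs, hξs⟩ := hkey _ hglt
      have hcomb := hF₀inter2 hξs (hfZ (max α₁ (e.symm q)))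
      have hsub2 : ({β | (⟨fun β => ℓ q (fstar.1 β), Fam.comp q fstar.2⟩ : FF).1 β = ξs}
          ∩ {β | max α₁ (e.symm q) < fstar.1 β}) ⊆
          {β | (e ξs).1 ∈ Xa (fstar.1 β) ∧ Compat q.1 (e ξs).1} := by
        rintro β ⟨h1, h2⟩
        have hspec := hℓ_spec q (fstar.1 β) (hdefset q β h2)
        have h3 : ℓ q (fstar.1 β) = ξs := h1
        rw [h3] at hspec
        exact ⟨hspec.2.1, hspec.2.2⟩
      have hboth := hF₀mono hsub2 hcomb
      obtain ⟨β₀, hβ₀⟩ := hF₀ne hboth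
      refine ⟨(e ξs).1, ⟨(e ξs).2, ?_⟩, hβ₀.2⟩
      exact hF₀mono (fun β hβ => hβ.1) hboth
    set Xstar : Set P := {x | ∃ hx : x ∈ Q, F₀ {β | x ∈ Xa (fstar.1 β)}} with hXstardef
    have hXanti : IsAntichainIn Xstar := by
      rintro x ⟨hxQ, hx⟩ y ⟨hyQ, hy⟩ hxy hcom
      obtain ⟨β, hβ⟩ := hF₀ne (hF₀inter2 (hF₀inter2 hx hy) (hfZ α₁))
      obtain ⟨⟨hβ1, hβ2⟩, hβ3⟩ := hβ
      obtain ⟨-, hXa_anti, -, -, -⟩ := hbad' (fstar.1 β) (le_of_lt hβ3)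
      exact hXa_anti x hβ1 y hβ2 hxy hcom
    have hXcard := hcc Xstar hXanti
    obtain ⟨β, hβ1, hβ2⟩ := hF₀ne (hF₀inter2
      (hF₀small (fun x : ↑Xstar => {β | (↑x : P) ∈ Xa (fstar.1 β)}) hXcard
        (fun x => x.2.choose_spec)) (hfZ α₁))
    obtain ⟨-, -, -, hqaQ, hqainc⟩ := hbad' (fstar.1 β) (le_of_lt hβ2)
    obtain ⟨x, ⟨hxQ, hxF⟩, hcx⟩ := hpredense ⟨qa (fstar.1 β), hqaQ⟩
    have hxXa : x ∈ Xa (fstar.1 β) := Set.mem_iInter.mp hβ1 ⟨x, hxQ, hxF⟩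
    exact hqainc x hxXa hcx
  obtain ⟨α₂, hα₁₂, hgood⟩ := hclaim
  have hcond1 : ∀ X ⊆ DD α₂, IsAntichainIn X → (∀ p ∈ DD α₂, ∃ q ∈ X, Compat p q) →
      ∀ p : P, ∃ q ∈ X, Compat p q := by
    intro X hXA hanti hpre p
    by_contra hnc
    push_neg at hnc
    have hXQ : X ⊆ Q := hXA.trans (hDD_sub α₂)
    have hXcard : #X < κ := (Cardinal.mk_le_mk_of_subset hXA).trans_lt (hDD_card α₂)
    obtain ⟨w, hwQ, hw⟩ := hQclose X hXQ hXcard ⟨p, hnc⟩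
    obtain ⟨x, hxX, hcx⟩ := hgood X hXA hanti hpre w hwQ
    exact hw x hxX hcx
  exact ⟨DD α₂, hDD_card α₂, fun i => (Set.subset_iUnion B i).trans (hα₁ α₂ hα₁₂),
    hcond1, hzorn (DD α₂) hcond1⟩
end

section
/- Let δ be an ordinal, f : δ^{<ω} → δ, and γ a countable ordinal. Define the tree T of pairs (s, t) where s ∈ δ^{<ω}, t is a finite order-preserving injection from an initial segment of an enumeration of γ into ran(s)-closure data, such that ran(s) is 'f-closure consistent' (f applied to tuples from ran(s) that have been enumerated so far appears in ran(s) or is promised). Then T has an infinite branch if and only if there exists a countable σ ⊆ δ closed under f (f[σ^{<ω}] ⊆ σ) with order type otp(σ) = γ. -/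
open Set

/-- `σ` has order type `γ`: there is an order isomorphism from `Iio γ` onto `σ`. -/
def OrdType (σ : Set Ordinal) (γ : Ordinal) : Prop :=
  ∃ g : Ordinal → Ordinal, (∀ β < γ, g β ∈ σ) ∧
    (∀ β₁ < γ, ∀ β₂ < γ, β₁ < β₂ → g β₁ < g β₂) ∧
    ∀ a ∈ σ, ∃ β < γ, g β = a

/-- A node `(s, t)` of the tree `T` of finite approximations: `s` is a finite partial
enumeration of a subset of `δ` whose odd positions realize the `f`-closure promises coded
by the bookkeeping surjection `c : ℕ → List ℕ`, and `t` is (an interleaving of) a finite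
order-preserving map from `γ` (enumerated by `e`) into the entries of `s` (even positions
of `t`) together with a finite order-preserving map from the entries of `s` back into `γ`
(odd positions of `t`). -/
def TreeNode (δ γ : Ordinal) (f : List Ordinal → Ordinal) (e : ℕ → Ordinal)
    (c : ℕ → List ℕ) (st : List Ordinal × List Ordinal) : Prop :=
  (∀ a ∈ st.1, a < δ) ∧
  (∀ k : ℕ, 2 * k + 1 < st.1.length → (∀ i ∈ c k, i < 2 * k + 1) →
    st.1.getD (2 * k + 1) 0 = f ((c k).map fun i => st.1.getD i 0)) ∧
  st.2.length ≤ 2 * st.1.length ∧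
  (∀ i : ℕ, 2 * i < st.2.length → st.2.getD (2 * i) 0 ∈ st.1) ∧
  (∀ i j : ℕ, 2 * i < st.2.length → 2 * j < st.2.length →
    (e i < e j ↔ st.2.getD (2 * i) 0 < st.2.getD (2 * j) 0) ∧
    (e i = e j → st.2.getD (2 * i) 0 = st.2.getD (2 * j) 0)) ∧
  (∀ i : ℕ, 2 * i + 1 < st.2.length → st.2.getD (2 * i + 1) 0 < γ) ∧
  (∀ i j : ℕ, 2 * i + 1 < st.2.length → 2 * j + 1 < st.2.length →
    (st.1.getD i 0 < st.1.getD j 0 ↔ st.2.getD (2 * i + 1) 0 < st.2.getD (2 * j + 1) 0) ∧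
    (st.1.getD i 0 = st.1.getD j 0 → st.2.getD (2 * i + 1) 0 = st.2.getD (2 * j + 1) 0))

lemma ofFn_getD (s : ℕ → Ordinal) (n j : ℕ) (h : j < n) :
    (List.ofFn fun i : Fin n => s i.1).getD j 0 = s j := by
  have h' : j < (List.ofFn fun i : Fin n => s i.1).length := by simpa using h
  rw [List.getD_eq_getElem _ _ h', List.getElem_ofFn]

lemma mem_ofFn_iff (s : ℕ → Ordinal) (n : ℕ) (a : Ordinal) :
    a ∈ (List.ofFn fun i : Fin n => s i.1) ↔ ∃ j < n, s j = a := by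
  simp only [List.mem_ofFn]
  constructor
  · rintro ⟨j, rfl⟩; exact ⟨j.1, j.2, rfl⟩
  · rintro ⟨j, hj, rfl⟩; exact ⟨⟨j, hj⟩, rfl⟩

open Classical in
noncomputable def stepFn (f : List Ordinal → Ordinal) (c : ℕ → List ℕ) (u : ℕ → Ordinal)
    (n : ℕ) (l : List Ordinal) : Ordinal :=
  if n % 2 = 0 then u (n / 2)
  else if (∀ i ∈ c (n / 2), i < n) then f ((c (n / 2)).map (l.getD · 0)) else u 0

noncomputable def buildL (f : List Ordinal → Ordinal) (c : ℕ → List ℕ) (u : ℕ → Ordinal) :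
    ℕ → List Ordinal
  | 0 => []
  | n + 1 => buildL f c u n ++ [stepFn f c u n (buildL f c u n)]

noncomputable def buildS (f : List Ordinal → Ordinal) (c : ℕ → List ℕ) (u : ℕ → Ordinal)
    (n : ℕ) : Ordinal := stepFn f c u n (buildL f c u n)

lemma buildL_length (f c u) : ∀ n, (buildL f c u n).length = n := by
  intro n; induction n with
  | zero => rfl
  | succ n ih => simp [buildL, ih]

lemma buildL_getD (f c u) : ∀ m j, j < m → (buildL f c u m).getD j 0 = buildS f c u j := by
  intro m
  induction m with
  | zero => omega
  | succ m ih =>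
    intro j hj
    rcases Nat.lt_or_ge j m with h | h
    · rw [buildL, List.getD_append _ _ _ _ (by rw [buildL_length]; exact h)]
      exact ih j h
    · have hj' : j = m := by omega
      subst hj'
      rw [buildL, List.getD_eq_getElem _ _ (by simp [buildL_length])]
      rw [List.getElem_append_right (by simp [buildL_length])]
      simp [buildL_length, buildS]

lemma buildS_even (f c u k) : buildS f c u (2 * k) = u k := by
  rw [buildS, stepFn, if_pos (by omega)]
  congr 1; omega

lemma buildS_odd (f c u k) (h : ∀ i ∈ c k, i < 2 * k + 1) :
    buildS f c u (2 * k + 1) = f ((c k).map fun i => buildS f c u i) := by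
  rw [buildS, stepFn, if_neg (by omega)]
  have hk : (2 * k + 1) / 2 = k := by omega
  rw [hk, if_pos h]
  congr 1
  apply List.map_congr_left
  intro i hi
  exact buildL_getD f c u _ i (h i hi)

lemma buildS_odd' (f c u k) (h : ¬ ∀ i ∈ c k, i < 2 * k + 1) :
    buildS f c u (2 * k + 1) = u 0 := by
  rw [buildS, stepFn, if_neg (by omega)]
  have hk : (2 * k + 1) / 2 = k := by omega
  rw [hk, if_neg h]


universe u
/-- mutual embeddings give an isomorphism (hence OrdType). -/
lemma ordType_of_embeddings (σ : Set Ordinal.{u}) (γ : Ordinal.{u})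
    (F : ↥(Iio γ :Set Ordinal) → ↥σ) (hF : ∀ a b, a.1 < b.1 → (F a).1 < (F b).1)
    (G : ↥σ → ↥(Iio γ :Set Ordinal)) (hG : ∀ a b, a.1 < b.1 → (G a).1 < (G b).1) :
    OrdType σ γ := by
  have hwσ : IsWellOrder σ (Subrel (· < ·) σ) :=
    inferInstanceAs (IsWellOrder σ (Subrel ((· < ·) : Ordinal.{u} → Ordinal.{u} → Prop) (· ∈ σ)))
  have hwγ : IsWellOrder (Iio γ : Set Ordinal) (Subrel (· < ·) (Iio γ)) :=
    inferInstanceAs (IsWellOrder (Iio γ : Set Ordinal)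
      (Subrel ((· < ·) : Ordinal.{u} → Ordinal.{u} → Prop) (· ∈ Iio γ)))
  have hwσ' : IsWellOrder (Subtype σ) (Subrel ((· < ·) : Ordinal → Ordinal → Prop) σ) := hwσ
  have hwγ' : IsWellOrder (Subtype (Iio γ)) (Subrel ((· < ·) : Ordinal → Ordinal → Prop) (Iio γ)) :=
    hwγ
  have htσ : Std.Trichotomous (Subrel ((· < ·) : Ordinal → Ordinal → Prop) σ) := hwσ.toTrichotomous
  have htγ : Std.Trichotomous (Subrel ((· < ·) : Ordinal → Ordinal → Prop) (Iio γ)) :=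
    hwγ.toTrichotomous
  have F' : Subrel ((· < ·) : Ordinal → Ordinal → Prop) (Iio γ) ↪r Subrel (· < ·) σ :=
    RelEmbedding.ofMonotone F (fun a b h => hF a b h)
  have G' : Subrel ((· < ·) : Ordinal → Ordinal → Prop) σ ↪r Subrel (· < ·) (Iio γ) :=
    RelEmbedding.ofMonotone G (fun a b h => hG a b h)
  have h1 : Ordinal.type (Subrel ((· < ·) : Ordinal → Ordinal → Prop) (Iio γ))
      = Ordinal.type (Subrel (· < ·) σ) :=
    le_antisymm (Ordinal.type_le_iff'.2 ⟨F'⟩) (Ordinal.type_le_iff'.2 ⟨G'⟩)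
  obtain ⟨iso⟩ := Ordinal.type_eq.1 h1
  classical
  refine ⟨fun β => if h : β < γ then (iso ⟨β, h⟩).1 else 0, ?_, ?_, ?_⟩
  · intro β hβ; simp only [dif_pos hβ]; exact (iso ⟨β, hβ⟩).2
  · intro β₁ h₁ β₂ h₂ hlt
    simp only [dif_pos h₁, dif_pos h₂]
    have := iso.map_rel_iff (a := ⟨β₁, h₁⟩) (b := ⟨β₂, h₂⟩)
    exact this.2 hlt
  · intro a ha
    refine ⟨(iso.symm ⟨a, ha⟩).1, (iso.symm ⟨a, ha⟩).2, ?_⟩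
    dsimp only
    rw [dif_pos (show (iso.symm ⟨a, ha⟩).1 < γ from (iso.symm ⟨a, ha⟩).2)]
    exact congrArg Subtype.val (iso.apply_symm_apply ⟨a, ha⟩)

theorem fwd (δ γ : Ordinal) (hγ : 0 < γ) (hγc : γ.card ≤ ℵ₀)
    (f : List Ordinal → Ordinal) (hf : ∀ l : List Ordinal, (∀ b ∈ l, b < δ) → f l < δ)
    (e : ℕ → Ordinal) (he1 : ∀ n, e n < γ) (he2 : ∀ β < γ, ∃ n, e n = β)
    (c : ℕ → List ℕ) (hc : ∀ l : List ℕ, {k | c k = l}.Infinite)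
    (s t : ℕ → Ordinal)
    (H : ∀ n : ℕ, TreeNode δ γ f e c
          (List.ofFn fun i : Fin n => s i.1, List.ofFn fun i : Fin n => t i.1)) :
      ∃ σ : Set Ordinal, σ.Countable ∧ σ ⊆ Set.Iio δ ∧
        (∀ l : List Ordinal, (∀ b ∈ l, b ∈ σ) → f l ∈ σ) ∧ OrdType σ γ := by
  classical
  -- pointwise facts
  have hsδ : ∀ i, s i < δ := by
    intro i
    have h1 := (H (i + 1)).1
    exact h1 (s i) ((mem_ofFn_iff s (i + 1) (s i)).2 ⟨i, lt_add_one i, rfl⟩)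
  -- even t-values are in range s
  have htmem : ∀ i, ∃ j, s j = t (2 * i) := by
    intro i
    have h4 := (H (2 * i + 1)).2.2.2.1 i (by simpa using by omega)
    rw [ofFn_getD t (2 * i + 1) (2 * i) (by omega)] at h4
    obtain ⟨j, _, hj⟩ := (mem_ofFn_iff s (2 * i + 1) _).1 h4
    exact ⟨j, hj⟩
  -- the order-iff for even positions
  have ht5 : ∀ i j, (e i < e j ↔ t (2 * i) < t (2 * j)) := by
    intro i j
    have h5 := (H (2 * i + 2 * j + 1)).2.2.2.2.1 i j
      (by simpa using by omega) (by simpa using by omega)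
    rw [ofFn_getD t _ _ (by omega), ofFn_getD t _ _ (by omega)] at h5
    exact h5.1
  -- t odd bounds
  have ht6 : ∀ i, t (2 * i + 1) < γ := by
    intro i
    have h6 := (H (2 * i + 2)).2.2.2.2.2.1 i (by simpa using by omega)
    rwa [ofFn_getD t _ _ (by omega)] at h6
  have ht7 : ∀ i j, (s i < s j ↔ t (2 * i + 1) < t (2 * j + 1)) := by
    intro i j
    have h7 := (H (2 * i + 2 * j + 2)).2.2.2.2.2.2 i j
      (by simpa using by omega) (by simpa using by omega)
    rw [ofFn_getD t _ _ (by omega), ofFn_getD t _ _ (by omega),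
      ofFn_getD s _ _ (by omega), ofFn_getD s _ _ (by omega)] at h7
    exact h7.1
  refine ⟨Set.range s, Set.countable_range s, ?_, ?_, ?_⟩
  · rintro a ⟨i, rfl⟩; exact hsδ i
  · -- closure under f
    intro l hl
    -- choose index list
    have : ∃ idx : List ℕ, idx.map s = l := by
      induction l with
      | nil => exact ⟨[], rfl⟩
      | cons a l ih =>
        obtain ⟨idx, hidx⟩ := ih (fun b hb => hl b (List.mem_cons_of_mem _ hb))
        obtain ⟨i, hi⟩ := hl a List.mem_cons_self
        exact ⟨i :: idx, by simp [hi, hidx]⟩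
    obtain ⟨idx, rfl⟩ := this
    -- choose big k with c k = idx
    obtain ⟨k, hk, hkbig⟩ := (hc idx).exists_gt (idx.foldr max 0)
    have hle : ∀ (L : List ℕ), ∀ i ∈ L, i ≤ L.foldr max 0 := by
      intro L
      induction L with
      | nil => simp
      | cons a l ih =>
        intro i hi
        rcases List.mem_cons.1 hi with rfl | hi
        · exact le_max_left _ _
        · exact le_trans (ih i hi) (le_max_right _ _)
    have hidxlt : ∀ i ∈ idx, i < 2 * k + 1 := fun i hi => by
      have := hle idx i hi; omega
    have hck : c k = idx := hk
    have h2 := (H (2 * k + 2)).2.1 k (by simpa using by omega)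
      (by rw [hck]; exact hidxlt)
    rw [ofFn_getD s _ _ (by omega)] at h2
    have : ((c k).map fun i => (List.ofFn fun i : Fin (2 * k + 2) => s i.1).getD i 0)
        = idx.map s := by
      rw [hck]
      apply List.map_congr_left
      intro i hi
      exact ofFn_getD s _ _ (by have := hidxlt i hi; omega)
    rw [this] at h2
    exact ⟨2 * k + 1, h2⟩
  · -- OrdType
    apply ordType_of_embeddings
    case F => exact fun β => ⟨t (2 * (he2 β.1 β.2).choose), htmem _⟩
    case hF =>
      intro a b hab
      have ha := (he2 a.1 a.2).choose_spec
      have hb := (he2 b.1 b.2).choose_spec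
      exact (ht5 _ _).1 (by rw [ha, hb]; exact hab)
    case G => exact fun a => ⟨t (2 * a.2.choose + 1), ht6 _⟩
    case hG =>
      intro a b hab
      have ha : s a.2.choose = a.1 := a.2.choose_spec
      have hb : s b.2.choose = b.1 := b.2.choose_spec
      exact (ht7 _ _).1 (by rw [ha, hb]; exact hab)

theorem bwd (δ γ : Ordinal) (hγ : 0 < γ) (hγc : γ.card ≤ ℵ₀)
    (f : List Ordinal → Ordinal) (hf : ∀ l : List Ordinal, (∀ b ∈ l, b < δ) → f l < δ)
    (e : ℕ → Ordinal) (he1 : ∀ n, e n < γ) (he2 : ∀ β < γ, ∃ n, e n = β)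
    (c : ℕ → List ℕ) (hc : ∀ l : List ℕ, {k | c k = l}.Infinite)
    (σ : Set Ordinal) (hcnt : σ.Countable) (hsub : σ ⊆ Set.Iio δ)
    (hcl : ∀ l : List Ordinal, (∀ b ∈ l, b ∈ σ) → f l ∈ σ) (hot : OrdType σ γ) :
    ∃ s t : ℕ → Ordinal, ∀ n : ℕ,
        TreeNode δ γ f e c
          (List.ofFn fun i : Fin n => s i.1, List.ofFn fun i : Fin n => t i.1) := by
  classical
  obtain ⟨g, hg1, hg2, hg3⟩ := hot
  set u : ℕ → Ordinal := fun n => g (e n) with hu_def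
  have hu : ∀ n, u n ∈ σ := fun n => hg1 (e n) (he1 n)
  set s : ℕ → Ordinal := buildS f c u with hs_def
  -- inverse of g on σ
  set inv : Ordinal → Ordinal := fun a => if h : a ∈ σ then (hg3 a h).choose else 0 with hinv_def
  have hinv1 : ∀ a ∈ σ, inv a < γ := by
    intro a ha; rw [hinv_def]; dsimp only; rw [dif_pos ha]; exact (hg3 a ha).choose_spec.1
  have hinv2 : ∀ a ∈ σ, g (inv a) = a := by
    intro a ha; rw [hinv_def]; dsimp only; rw [dif_pos ha]; exact (hg3 a ha).choose_spec.2
  -- monotonicity iff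
  have hmono : ∀ β₁ < γ, ∀ β₂ < γ, (β₁ < β₂ ↔ g β₁ < g β₂) := by
    intro β₁ h₁ β₂ h₂
    constructor
    · exact hg2 β₁ h₁ β₂ h₂
    · intro h
      rcases lt_trichotomy β₁ β₂ with h' | rfl | h'
      · exact h'
      · exact absurd h (lt_irrefl _)
      · exact absurd (hg2 β₂ h₂ β₁ h₁ h') (asymm h)
  -- members of σ
  have hsσ : ∀ n, s n ∈ σ := by
    intro n
    induction n using Nat.strong_induction_on with
    | _ n ih =>
      rcases Nat.even_or_odd n with ⟨k, hk⟩ | ⟨k, hk⟩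
      · have : n = 2 * k := by omega
        subst this
        rw [hs_def, buildS_even]
        exact hu k
      · subst hk
        by_cases h : ∀ i ∈ c k, i < 2 * k + 1
        · rw [hs_def, buildS_odd f c u k h]
          apply hcl
          intro b hb
          obtain ⟨i, hi, rfl⟩ := List.mem_map.1 hb
          exact ih i (by have := h i hi; omega)
        · rw [hs_def, buildS_odd' f c u k h]
          exact hu 0
  set t : ℕ → Ordinal := fun n => if n % 2 = 0 then g (e (n / 2)) else inv (s (n / 2))
    with ht_def
  have ht_even : ∀ i, t (2 * i) = g (e i) := by
    intro i; rw [ht_def]; dsimp only; rw [if_pos (by omega)]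
    congr 2; omega
  have ht_odd : ∀ i, t (2 * i + 1) = inv (s i) := by
    intro i; rw [ht_def]; dsimp only; rw [if_neg (by omega)]
    congr 2; omega
  have hs_even : ∀ i, s (2 * i) = g (e i) := fun i => buildS_even f c u i
  refine ⟨s, t, fun n => ⟨?_, ?_, ?_, ?_, ?_, ?_, ?_⟩⟩
  · intro a ha
    obtain ⟨j, hj, rfl⟩ := (mem_ofFn_iff s n a).1 ha
    exact hsub (hsσ j)
  · intro k hk1 hk2
    simp only [List.length_ofFn] at hk1
    rw [ofFn_getD s n _ hk1, hs_def, buildS_odd f c u k hk2]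
    congr 1
    apply List.map_congr_left
    intro i hi
    rw [ofFn_getD s n i (by have := hk2 i hi; omega)]
  · simp only [List.length_ofFn]; omega
  · intro i hi
    simp only [List.length_ofFn] at hi
    rw [ofFn_getD t n _ hi, ht_even]
    exact (mem_ofFn_iff s n _).2 ⟨2 * i, hi, hs_even i⟩
  · intro i j hi hj
    simp only [List.length_ofFn] at hi hj
    rw [ofFn_getD t n _ hi, ofFn_getD t n _ hj, ht_even, ht_even]
    exact ⟨hmono _ (he1 i) _ (he1 j), fun h => by rw [h]⟩
  · intro i hi
    simp only [List.length_ofFn] at hi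
    rw [ofFn_getD t n _ hi, ht_odd]
    exact hinv1 _ (hsσ i)
  · intro i j hi hj
    simp only [List.length_ofFn] at hi hj
    rw [ofFn_getD t n _ hi, ofFn_getD t n _ hj, ht_odd, ht_odd,
      ofFn_getD s n i (by omega), ofFn_getD s n j (by omega)]
    constructor
    · have h := hmono _ (hinv1 _ (hsσ i)) _ (hinv1 _ (hsσ j))
      rw [hinv2 _ (hsσ i), hinv2 _ (hsσ j)] at h
      exact h.symm
    · intro h; rw [h]

/-- Let `δ` be an ordinal, `f : δ^{<ω} → δ`, and `γ` a nonzero countable ordinal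
enumerated by `e : ω → γ`; let `c : ℕ → List ℕ` be a bookkeeping surjection with infinite
fibers.  The tree `T` of finite approximations `(s, t)` (ordered by coordinatewise
extension) has an infinite branch if and only if there is a countable `σ ⊆ δ` closed under
`f` (i.e. `f[σ^{<ω}] ⊆ σ`) with order type `otp(σ) = γ`. -/
theorem tree_branch_iff_closed_subset (δ γ : Ordinal) (hγ : 0 < γ) (hγc : γ.card ≤ ℵ₀)
    (f : List Ordinal → Ordinal) (hf : ∀ l : List Ordinal, (∀ b ∈ l, b < δ) → f l < δ)
    (e : ℕ → Ordinal) (he1 : ∀ n, e n < γ) (he2 : ∀ β < γ, ∃ n, e n = β)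
    (c : ℕ → List ℕ) (hc : ∀ l : List ℕ, {k | c k = l}.Infinite) :
    (∃ s t : ℕ → Ordinal, ∀ n : ℕ,
        TreeNode δ γ f e c
          (List.ofFn fun i : Fin n => s i.1, List.ofFn fun i : Fin n => t i.1)) ↔
      ∃ σ : Set Ordinal, σ.Countable ∧ σ ⊆ Set.Iio δ ∧
        (∀ l : List Ordinal, (∀ b ∈ l, b ∈ σ) → f l ∈ σ) ∧ OrdType σ γ := by
  constructor
  · rintro ⟨s, t, H⟩
    exact fwd δ γ hγ hγc f hf e he1 he2 c hc s t H
  · rintro ⟨σ, hcnt, hsub, hcl, hot⟩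
    exact bwd δ γ hγ hγc f hf e he1 he2 c hc σ hcnt hsub hcl hot
end
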